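/- arXiv:2004.07652 — 5 statements merged into one kernel-verified Lean document; each statement's English description precedes it below -/
import Mathlib

section
/- For any non-negative integer n, the sum over k from 0 to n of (-1)^k * C(n,k) * C(n+k,k) * H_k^2 equals 2*(-1)^n * (2*H_n^2 + sum_{k=1}^n (-1)^k/k^2), where H_k denotes the k-th harmonic number. -/
open Finset

/-- The `n`-th harmonic number `H_n = ∑_{j=1}^n 1/j`. -/
def H (n : ℕ) : ℚ := ∑ j ∈ Finset.range n, 1 / (j + 1 : ℚ)

lemma H_succ (n : ℕ) : H (n+1) = H n + 1/(n+1 : ℚ) := by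
  simp [H, Finset.sum_range_succ]

-- cast helpers
lemma cast_ne (n : ℕ) : ((n:ℚ)+1) ≠ 0 := by positivity

lemma helper1 (M i : ℕ) : (M.choose i : ℚ)/(i+1) = ((M+1).choose (i+1) : ℚ)/(M+1) := by
  have h := Nat.add_one_mul_choose_eq M i
  rw [div_eq_div_iff (cast_ne i) (cast_ne M)]
  have : ((M+1) * M.choose i : ℕ) = ((M+1).choose (i+1) * (i+1) : ℕ) := by
    simpa [Nat.succ_eq_add_one, mul_comm] using h
  have := congrArg (fun z : ℕ => (z:ℚ)) this
  push_cast at this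
  linarith [this]

lemma alt_zero (M : ℕ) : ∑ i ∈ Finset.range (M+2), (-1:ℚ)^i * ((M+1).choose i) = 0 := by
  have h := Int.alternating_sum_range_choose_of_ne (Nat.succ_ne_zero M)
  have h2 := congrArg (fun z : ℤ => (z : ℚ)) h
  push_cast at h2
  simpa using h2

lemma alt1 (M : ℕ) : ∑ t ∈ Finset.range (M+1), (-1:ℚ)^t * ((M+1).choose (t+1)) = 1 := by
  have h := alt_zero M
  rw [Finset.sum_range_succ' _ (M+1)] at h
  simp only [pow_succ, pow_zero, Nat.choose_zero_right, Nat.cast_one] at h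
  have : ∑ i ∈ Finset.range (M+1), (-1:ℚ)^i * (-1) * ((M+1).choose (i+1)) = -1 := by
    linarith [h]
  calc ∑ t ∈ Finset.range (M+1), (-1:ℚ)^t * ((M+1).choose (t+1))
      = -∑ i ∈ Finset.range (M+1), (-1:ℚ)^i * (-1) * ((M+1).choose (i+1)) := by
        rw [← Finset.sum_neg_distrib]
        exact Finset.sum_congr rfl (fun x _ => by ring)
    _ = 1 := by rw [this]; ring

lemma LD (d : ℕ) : ∀ (N : ℕ), ∀ (a : ℕ),
    ∑ i ∈ Finset.range (N+1), (-1:ℚ)^i * (N.choose i) * ((a+i).choose d)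
      = (-1:ℚ)^N * (if N ≤ d then ((a.choose (d-N)) : ℚ) else 0) := by
  intro N
  induction N with
  | zero => intro a; simp
  | succ N ih =>
    intro a
    have key : ∑ i ∈ Finset.range (N+2), (-1:ℚ)^i * ((N+1).choose i) * ((a+i).choose d)
        = (∑ i ∈ Finset.range (N+1), (-1:ℚ)^i * (N.choose i) * ((a+i).choose d))
          - ∑ i ∈ Finset.range (N+1), (-1:ℚ)^i * (N.choose i) * ((a+1+i).choose d) := by
      rw [Finset.sum_range_succ' _ (N+1)]
      rw [Finset.sum_range_succ' (fun i => (-1:ℚ)^i * (N.choose i) * ((a+i).choose d)) N]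
      have e1 : ∀ i, (-1:ℚ)^(i+1) * ((N+1).choose (i+1)) * ((a+(i+1)).choose d)
          = -((-1:ℚ)^i * (N.choose i) * ((a+1+i).choose d))
            - ((-1:ℚ)^i * (N.choose (i+1)) * ((a+1+i).choose d)) := by
        intro i
        have : ((N+1).choose (i+1) : ℚ) = (N.choose i : ℚ) + (N.choose (i+1) : ℚ) := by
          rw [Nat.choose_succ_succ]; push_cast; ring
        rw [this]
        have : a + (i+1) = a + 1 + i := by ring
        rw [this]; ring
      rw [Finset.sum_congr rfl (fun i _ => e1 i)]
      rw [Finset.sum_sub_distrib]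
      -- now : (∑ -(..) ) - (∑ C(N,i+1)..) + first-term = ...
      have e2 : ∑ i ∈ Finset.range (N+1), ((-1:ℚ)^i * (N.choose (i+1)) * ((a+1+i).choose d))
          = ∑ i ∈ Finset.range N, ((-1:ℚ)^i * (N.choose (i+1)) * ((a+1+i).choose d)) := by
        rw [Finset.sum_range_succ]
        simp [Nat.choose_succ_self]
      have e3 : ∑ i ∈ Finset.range N, ((-1:ℚ)^i * (N.choose (i+1)) * ((a+1+i).choose d))
          = -∑ i ∈ Finset.range N, ((-1:ℚ)^(i+1) * (N.choose (i+1)) * ((a+(i+1)).choose d)) := by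
        rw [← Finset.sum_neg_distrib]
        refine Finset.sum_congr rfl (fun i _ => ?_)
        have : a + (i+1) = a + 1 + i := by ring
        rw [this]; ring
      rw [Finset.sum_neg_distrib, e2, e3]
      simp only [pow_zero, Nat.choose_zero_right, Nat.cast_one, Nat.add_zero, one_mul, mul_one,
        Nat.add_eq, add_zero]
      ring
    rw [key, ih a, ih (a+1)]
    by_cases h : N + 1 ≤ d
    · rw [if_pos h, if_pos (Nat.le_of_succ_le h), if_pos (Nat.le_of_succ_le h)]
      have hd : d - N = (d - (N+1)) + 1 := by omega
      have : ((a+1).choose (d-N) : ℚ) = (a.choose (d - (N+1)) : ℚ) + (a.choose (d-N) : ℚ) := by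
        rw [hd, Nat.choose_succ_succ]
        push_cast
        rw [Nat.succ_eq_add_one, ← hd]
      rw [this]; ring
    · rw [if_neg h]
      by_cases h2 : N ≤ d
      · have hd : d = N := by omega
        rw [if_pos h2, if_pos h2, hd]
        simp
      · rw [if_neg h2, if_neg h2]; ring

lemma c0 (M : ℕ) : ∑ i ∈ Finset.range M, (-1:ℚ)^i * (M.choose (i+1)) / (i+1) = H M := by
  induction M with
  | zero => simp [H]
  | succ M ih =>
    have split : ∀ i, (-1:ℚ)^i * ((M+1).choose (i+1)) / (i+1)
        = (-1:ℚ)^i * (M.choose i) / (i+1) + (-1:ℚ)^i * (M.choose (i+1)) / (i+1) := by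
      intro i
      have : ((M+1).choose (i+1) : ℚ) = (M.choose i : ℚ) + (M.choose (i+1)) := by
        rw [Nat.choose_succ_succ]; push_cast; ring
      rw [this]; ring
    rw [Finset.sum_congr rfl (fun i _ => split i), Finset.sum_add_distrib]
    have hB : ∑ i ∈ Finset.range (M+1), (-1:ℚ)^i * (M.choose (i+1)) / (i+1) = H M := by
      rw [Finset.sum_range_succ, Nat.choose_succ_self]
      simpa using ih
    have hA : ∑ i ∈ Finset.range (M+1), (-1:ℚ)^i * (M.choose i) / (i+1) = 1/(M+1) := by
      have e : ∀ i, (-1:ℚ)^i * (M.choose i) / (i+1)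
          = ((-1:ℚ)^i * ((M+1).choose (i+1))) * (1/(M+1)) := by
        intro i
        have := helper1 M i
        calc (-1:ℚ)^i * (M.choose i) / (i+1) = (-1:ℚ)^i * ((M.choose i : ℚ)/(i+1)) := by ring
          _ = (-1:ℚ)^i * (((M+1).choose (i+1) : ℚ)/(M+1)) := by rw [this]
          _ = ((-1:ℚ)^i * ((M+1).choose (i+1))) * (1/(M+1)) := by ring
      rw [Finset.sum_congr rfl (fun i _ => e i), ← Finset.sum_mul, alt1, one_mul]
    rw [hA, hB, H_succ]; ring

lemma c3 (M : ℕ) : ∑ j ∈ Finset.range (M+1), (-1:ℚ)^j * ((M+1).choose (j+1)) * H (j+1) = 1/(M+1) := by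
  induction M with
  | zero => simp [H]
  | succ M ih =>
    have split : ∀ j, (-1:ℚ)^j * ((M+2).choose (j+1)) * H (j+1)
        = (-1:ℚ)^j * ((M+1).choose j) * H (j+1) + (-1:ℚ)^j * ((M+1).choose (j+1)) * H (j+1) := by
      intro j
      have : ((M+2).choose (j+1) : ℚ) = ((M+1).choose j : ℚ) + ((M+1).choose (j+1)) := by
        rw [show M+2 = (M+1)+1 from rfl, Nat.choose_succ_succ]; push_cast; ring
      rw [this]; ring
    rw [Finset.sum_congr rfl (fun j _ => split j), Finset.sum_add_distrib]
    have hsecond : ∑ j ∈ Finset.range (M+2), (-1:ℚ)^j * ((M+1).choose (j+1)) * H (j+1)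
        = 1/(M+1) := by
      rw [Finset.sum_range_succ, Nat.choose_succ_self]
      simpa using ih
    have hfirst : ∑ j ∈ Finset.range (M+2), (-1:ℚ)^j * ((M+1).choose j) * H (j+1)
        = -1/(M+1) + 1/(M+2) := by
      have splitH : ∀ j, (-1:ℚ)^j * ((M+1).choose j) * H (j+1)
          = (-1:ℚ)^j * ((M+1).choose j) * H j + (-1:ℚ)^j * ((M+1).choose j) / (j+1) := by
        intro j; rw [H_succ]; ring
      rw [Finset.sum_congr rfl (fun j _ => splitH j), Finset.sum_add_distrib]
      have p1 : ∑ j ∈ Finset.range (M+2), (-1:ℚ)^j * ((M+1).choose j) * H j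
          = -(1/((M:ℚ)+1)) := by
        rw [Finset.sum_range_succ' _ (M+1)]
        have : ∀ j, (-1:ℚ)^(j+1) * ((M+1).choose (j+1)) * H (j+1)
            = -((-1:ℚ)^j * ((M+1).choose (j+1)) * H (j+1)) := by intro j; ring
        rw [Finset.sum_congr rfl (fun j _ => this j), Finset.sum_neg_distrib, ih]
        simp [H, one_div]
      have p2 : ∑ j ∈ Finset.range (M+2), (-1:ℚ)^j * ((M+1).choose j) / (j+1)
          = 1/(M+2) := by
        have e : ∀ j, (-1:ℚ)^j * ((M+1).choose j) / (j+1)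
            = ((-1:ℚ)^j * (((M+1)+1).choose (j+1))) * (1/(((M:ℚ)+1)+1)) := by
          intro j
          have h1 := helper1 (M+1) j
          calc (-1:ℚ)^j * ((M+1).choose j) / (j+1)
              = (-1:ℚ)^j * (((M+1).choose j : ℚ)/(j+1)) := by ring
            _ = (-1:ℚ)^j * ((((M+1)+1).choose (j+1) : ℚ)/(((M+1 : ℕ) : ℚ)+1)) := by rw [h1]
            _ = ((-1:ℚ)^j * (((M+1)+1).choose (j+1))) * (1/(((M:ℚ)+1)+1)) := by push_cast; ring
        rw [Finset.sum_congr rfl (fun j _ => e j), ← Finset.sum_mul, alt1 (M+1), one_mul]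
        push_cast; ring
      rw [p1, p2]; ring
    rw [hfirst, hsecond]
    push_cast; ring

lemma sig (k : ℕ) : ∑ j ∈ Finset.range k, H (j+1)/(j+1 : ℚ)
    = ∑ m ∈ Finset.range k, (-1:ℚ)^m * (k.choose (m+1)) / ((m+1 : ℚ))^2 := by
  induction k with
  | zero => simp
  | succ k ih =>
    rw [Finset.sum_range_succ, ih]
    have split : ∀ m, (-1:ℚ)^m * ((k+1).choose (m+1)) / ((m+1 : ℚ))^2
        = (-1:ℚ)^m * (k.choose m) / ((m+1 : ℚ))^2 + (-1:ℚ)^m * (k.choose (m+1)) / ((m+1 : ℚ))^2 := by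
      intro m
      have : ((k+1).choose (m+1) : ℚ) = (k.choose m : ℚ) + (k.choose (m+1)) := by
        rw [Nat.choose_succ_succ]; push_cast; ring
      rw [this]; ring
    rw [Finset.sum_congr rfl (fun m _ => split m), Finset.sum_add_distrib]
    have hB : ∑ m ∈ Finset.range (k+1), (-1:ℚ)^m * (k.choose (m+1)) / ((m+1 : ℚ))^2
        = ∑ m ∈ Finset.range k, (-1:ℚ)^m * (k.choose (m+1)) / ((m+1 : ℚ))^2 := by
      rw [Finset.sum_range_succ, Nat.choose_succ_self]; simp
    have hA : ∑ m ∈ Finset.range (k+1), (-1:ℚ)^m * (k.choose m) / ((m+1 : ℚ))^2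
        = H (k+1)/(k+1 : ℚ) := by
      have e : ∀ m, (-1:ℚ)^m * (k.choose m) / ((m+1 : ℚ))^2
          = ((-1:ℚ)^m * ((k+1).choose (m+1)) / (m+1 : ℚ)) * (1/((k:ℚ)+1)) := by
        intro m
        have h1 := helper1 k m
        calc (-1:ℚ)^m * (k.choose m) / ((m+1 : ℚ))^2
            = ((-1:ℚ)^m / (m+1)) * ((k.choose m : ℚ)/(m+1)) := by
              rw [pow_two, ← div_div]; ring
          _ = ((-1:ℚ)^m / (m+1)) * (((k+1).choose (m+1) : ℚ)/((k:ℚ)+1)) := by rw [h1]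
          _ = ((-1:ℚ)^m * ((k+1).choose (m+1)) / (m+1 : ℚ)) * (1/((k:ℚ)+1)) := by ring
      rw [Finset.sum_congr rfl (fun m _ => e m), ← Finset.sum_mul, c0 (k+1)]
      push_cast; ring
    rw [hA, hB]; ring

lemma h2p (k : ℕ) : ∑ j ∈ Finset.range k, 1/((j+1 : ℚ))^2
    = ∑ m ∈ Finset.range k, (-1:ℚ)^m * (k.choose (m+1)) * H (m+1) / (m+1 : ℚ) := by
  induction k with
  | zero => simp
  | succ k ih =>
    rw [Finset.sum_range_succ, ih]
    have split : ∀ m, (-1:ℚ)^m * ((k+1).choose (m+1)) * H (m+1) / (m+1 : ℚ)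
        = (-1:ℚ)^m * (k.choose m) * H (m+1) / (m+1 : ℚ)
          + (-1:ℚ)^m * (k.choose (m+1)) * H (m+1) / (m+1 : ℚ) := by
      intro m
      have : ((k+1).choose (m+1) : ℚ) = (k.choose m : ℚ) + (k.choose (m+1)) := by
        rw [Nat.choose_succ_succ]; push_cast; ring
      rw [this]; ring
    rw [Finset.sum_congr rfl (fun m _ => split m), Finset.sum_add_distrib]
    have hB : ∑ m ∈ Finset.range (k+1), (-1:ℚ)^m * (k.choose (m+1)) * H (m+1) / (m+1 : ℚ)
        = ∑ m ∈ Finset.range k, (-1:ℚ)^m * (k.choose (m+1)) * H (m+1) / (m+1 : ℚ) := by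
      rw [Finset.sum_range_succ, Nat.choose_succ_self]; simp
    have hA : ∑ m ∈ Finset.range (k+1), (-1:ℚ)^m * (k.choose m) * H (m+1) / (m+1 : ℚ)
        = 1/((k+1 : ℚ))^2 := by
      have e : ∀ m, (-1:ℚ)^m * (k.choose m) * H (m+1) / (m+1 : ℚ)
          = ((-1:ℚ)^m * ((k+1).choose (m+1)) * H (m+1)) * (1/((k:ℚ)+1)) := by
        intro m
        have h1 := helper1 k m
        calc (-1:ℚ)^m * (k.choose m) * H (m+1) / (m+1 : ℚ)
            = ((-1:ℚ)^m * H (m+1)) * ((k.choose m : ℚ)/(m+1)) := by ring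
          _ = ((-1:ℚ)^m * H (m+1)) * (((k+1).choose (m+1) : ℚ)/((k:ℚ)+1)) := by rw [h1]
          _ = ((-1:ℚ)^m * ((k+1).choose (m+1)) * H (m+1)) * (1/((k:ℚ)+1)) := by ring
      rw [Finset.sum_congr rfl (fun m _ => e m), ← Finset.sum_mul, c3 k, pow_two, ← div_div]
      ring
    rw [hA, hB]; ring

lemma Hsq (k : ℕ) : (H k)^2 = 2 * (∑ j ∈ Finset.range k, H (j+1)/(j+1 : ℚ))
    - ∑ j ∈ Finset.range k, 1/((j+1 : ℚ))^2 := by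
  induction k with
  | zero => simp [H]
  | succ k ih =>
    rw [Finset.sum_range_succ, Finset.sum_range_succ, H_succ,
      show (1:ℚ)/(((k:ℚ)+1)^2) = (1/((k:ℚ)+1))*(1/((k:ℚ)+1)) from by
        rw [pow_two, ← div_div]; ring]
    linear_combination ih

lemma Hsq_expand (k n : ℕ) (h : k ≤ n) : (H k)^2
    = ∑ m ∈ Finset.range n, (-1:ℚ)^m * (k.choose (m+1)) * (2/((m+1 : ℚ))^2 - H (m+1)/(m+1 : ℚ)) := by
  have ext : ∀ (f : ℕ → ℚ), (∀ m, k ≤ m+1 → (k.choose (m+1) : ℚ) = 0 ∨ (m+1 = k)) → True := fun _ _ => trivial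
  have key : (H k)^2 = ∑ m ∈ Finset.range k, (-1:ℚ)^m * (k.choose (m+1)) * (2/((m+1 : ℚ))^2 - H (m+1)/(m+1 : ℚ)) := by
    rw [Hsq, sig, h2p, Finset.mul_sum, ← Finset.sum_sub_distrib]
    exact Finset.sum_congr rfl (fun m _ => by ring)
  rw [key]
  apply Finset.sum_subset (Finset.range_subset_range.2 h)
  intro m _ hm
  have : k < m+1 := by simp at hm; omega
  rw [Nat.choose_eq_zero_of_lt this]
  simp

lemma helper2 (n j : ℕ) : ((n+j+1).choose j : ℚ)/(j+1) = ((n+j+1).choose (j+1) : ℚ)/((n:ℚ)+1) := by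
  have h := Nat.choose_succ_right_eq (n+j+1) j
  have h2 : n+j+1-j = n+1 := by omega
  rw [h2] at h
  have := congrArg (fun z : ℕ => (z:ℚ)) h
  push_cast at this
  rw [div_eq_div_iff (by positivity) (by positivity)]
  linarith [this]

lemma key1 (n M : ℕ) : ((n+1+M).choose M : ℚ) * ((n:ℚ)+1) = ((n+M).choose M : ℚ) * ((n:ℚ)+(M:ℚ)+1) := by
  have h := Nat.add_one_mul_choose_eq (n+M) n
  have e1 : (n+M).choose n = (n+M).choose M := Nat.choose_symm_add
  have e2 : (n+M).succ.choose (n+1) = (n+1+M).choose M := by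
    have : (n+M).succ = (n+1)+M := by omega
    rw [this]
    exact Nat.choose_symm_add
  rw [e1, e2] at h
  have := congrArg (fun z : ℕ => (z:ℚ)) h
  push_cast at this
  linarith [this]

lemma key2 (n M : ℕ) (h : M ≤ n+1) :
    ((n+1).choose M : ℚ) * ((n:ℚ)+1-(M:ℚ)) = (n.choose M : ℚ) * ((n:ℚ)+1) := by
  have hh := Nat.choose_mul_succ_eq n M
  have := congrArg (fun z : ℕ => (z:ℚ)) hh
  push_cast [Nat.cast_sub h] at this
  push_cast at this
  linarith [this]

lemma helper3 (n M : ℕ) (h : M ≤ n+1) :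
    ((n+1).choose M : ℚ) * ((n+1+M).choose M) - (n.choose M : ℚ) * ((n+M).choose M)
      = 2*(M:ℚ)/((n:ℚ)+1) * ((n+1).choose M) * ((n+M).choose M) := by
  have hne : ((n:ℚ)+1) ≠ 0 := by positivity
  rw [div_mul_eq_mul_div, div_mul_eq_mul_div, eq_div_iff hne]
  linear_combination (((n+1).choose M : ℚ)) * key1 n M + (((n+M).choose M : ℚ)) * key2 n M h

lemma helper4 (n M : ℕ) (h : M ≤ n+2) :
    ((n+2).choose M : ℚ) * ((n+1+M).choose M) - ((n+1).choose M : ℚ) * ((n+M).choose M)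
      = (M:ℚ)*(2*(n:ℚ)+3)/(((n:ℚ)+1)*((n:ℚ)+2)) * ((n+2).choose M) * ((n+M).choose M) := by
  have hne : (((n:ℚ)+1)*((n:ℚ)+2)) ≠ 0 := by positivity
  rw [div_mul_eq_mul_div, div_mul_eq_mul_div, eq_div_iff hne]
  have k2 : ((n+2).choose M : ℚ) * ((n:ℚ)+2-(M:ℚ)) = ((n+1).choose M : ℚ) * ((n:ℚ)+2) := by
    have hh := Nat.choose_mul_succ_eq (n+1) M
    have := congrArg (fun z : ℕ => (z:ℚ)) hh
    have hsub : ((n+1+1-M : ℕ) : ℚ) = (n:ℚ)+2-(M:ℚ) := by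
      push_cast [Nat.cast_sub (by omega : M ≤ n+1+1)]; ring
    push_cast [hsub] at this
    linarith [this]
  linear_combination (((n+2).choose M : ℚ)) * ((n:ℚ)+2) * key1 n M
    + (((n+M).choose M : ℚ)) * ((n:ℚ)+1) * k2

lemma Wp (n : ℕ) : ∑ j ∈ Finset.range (n+1), (-1:ℚ)^j * ((n+1).choose (j+1)) * ((n+j+1).choose (j+1)) = 1 := by
  have h := LD n (n+1) n
  rw [if_neg (by omega)] at h
  rw [Finset.sum_range_succ' _ (n+1)] at h
  simp only [pow_succ, Nat.choose_zero_right, Nat.cast_one, Nat.add_zero, pow_zero, one_mul,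
    mul_one, Nat.choose_self] at h
  have e : ∀ j, (-1:ℚ)^j * (-1) * ((n+1).choose (j+1)) * ((n+(j+1)).choose n)
      = -((-1:ℚ)^j * ((n+1).choose (j+1)) * ((n+j+1).choose (j+1))) := by
    intro j
    have h2 : (n+(j+1)).choose n = (n+j+1).choose (j+1) := Nat.choose_symm_add
    rw [h2]; ring
  rw [Finset.sum_congr rfl (fun j _ => e j), Finset.sum_neg_distrib] at h
  linarith [h]

lemma W (n : ℕ) : ∑ m ∈ Finset.range (n+2), (-1:ℚ)^m * ((n+2).choose (m+1)) * ((n+m+1).choose (m+1)) = 1 := by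
  have h := LD n (n+2) n
  rw [if_neg (by omega)] at h
  rw [Finset.sum_range_succ' _ (n+2)] at h
  simp only [pow_succ, Nat.choose_zero_right, Nat.cast_one, Nat.add_zero, pow_zero, one_mul,
    mul_one, Nat.choose_self] at h
  have e : ∀ m, (-1:ℚ)^m * (-1) * ((n+2).choose (m+1)) * ((n+(m+1)).choose n)
      = -((-1:ℚ)^m * ((n+2).choose (m+1)) * ((n+m+1).choose (m+1))) := by
    intro m
    have h2 : (n+(m+1)).choose n = (n+m+1).choose (m+1) := Nat.choose_symm_add
    rw [h2]; ring
  rw [Finset.sum_congr rfl (fun m _ => e m), Finset.sum_neg_distrib] at h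
  linarith [h]

lemma diamond (n M : ℕ) (h1 : 1 ≤ M) (h2 : M ≤ n) :
    ∑ k ∈ Finset.range (n+1), (-1:ℚ)^k * (n.choose k) * ((n+k).choose k) * (k.choose M)
      = (-1:ℚ)^n * (n.choose M) * ((n+M).choose M) := by
  rw [Finset.range_eq_Ico, ← Finset.sum_Ico_consecutive _ (Nat.zero_le M) (by omega : M ≤ n+1)]
  have hzero : ∑ k ∈ Finset.Ico 0 M, (-1:ℚ)^k * (n.choose k) * ((n+k).choose k) * (k.choose M) = 0 := by
    apply Finset.sum_eq_zero
    intro k hk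
    have : k < M := (Finset.mem_Ico.mp hk).2
    rw [Nat.choose_eq_zero_of_lt this]
    simp
  rw [hzero, zero_add, Finset.sum_Ico_eq_sum_range]
  have hrange : n+1-M = (n-M)+1 := by omega
  rw [hrange]
  have e : ∀ i, i ≤ n-M → (-1:ℚ)^(M+i) * (n.choose (M+i)) * ((n+(M+i)).choose (M+i)) * ((M+i).choose M)
      = ((-1:ℚ)^M * (n.choose M)) * ((-1:ℚ)^i * ((n-M).choose i) * (((n+M)+i).choose n)) := by
    intro i hi
    have hmul := Nat.choose_mul (n := n) (show M ≤ M+i by omega)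
    have hsub : M+i-M = i := by omega
    rw [hsub] at hmul
    have hsymm : (n+(M+i)).choose (M+i) = ((n+M)+i).choose n := by
      rw [show n+(M+i) = (M+i)+n from by omega, Nat.choose_symm_add]
      congr 1; omega
    have hc := congrArg (fun z : ℕ => (z:ℚ)) hmul
    push_cast at hc
    rw [hsymm, pow_add]
    linear_combination ((-1:ℚ)^M * (-1:ℚ)^i * ((((n+M)+i).choose n : ℕ) : ℚ)) * hc
  rw [Finset.sum_congr rfl (fun i hi => e i (by simp at hi; omega))]
  rw [← Finset.mul_sum, LD n (n-M) (n+M)]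
  rw [if_pos (by omega : n-M ≤ n)]
  have : n-(n-M) = M := by omega
  rw [this]
  have hpow : (-1:ℚ)^M * (-1:ℚ)^(n-M) = (-1:ℚ)^n := by
    rw [← pow_add]
    congr 1; omega
  linear_combination ((n.choose M : ℚ) * (((n+M).choose M : ℕ) : ℚ)) * hpow

lemma G (n : ℕ) : ∑ m ∈ Finset.range (n+1),
    (-1:ℚ)^m * ((n+1).choose (m+1)) * ((n+m+1).choose (m+1)) / ((m:ℚ)+1) = H (n+1) + H n := by
  induction n with
  | zero => simp [H]
  | succ n ih =>
    have key : ∀ m, m ≤ n+1 →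
        (-1:ℚ)^m * ((n+2).choose (m+1)) * ((n+1+m+1).choose (m+1)) / ((m:ℚ)+1)
        = (-1:ℚ)^m * ((n+1).choose (m+1)) * ((n+m+1).choose (m+1)) / ((m:ℚ)+1)
          + ((-1:ℚ)^m * ((n+2).choose (m+1)) * ((n+m+1).choose (m+1)))
            * ((2*(n:ℚ)+3)/(((n:ℚ)+1)*((n:ℚ)+2))) := by
      intro m hm
      have h4 := helper4 n (m+1) (by omega)
      push_cast at h4
      have e : ((n+1+(m+1)).choose (m+1) : ℚ) = ((n+1+m+1).choose (m+1) : ℚ) := rfl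
      have e2 : ((n+(m+1)).choose (m+1) : ℚ) = ((n+m+1).choose (m+1) : ℚ) := rfl
      rw [e, e2] at h4
      have hm0 : ((m:ℚ)+1) ≠ 0 := by positivity
      have key' : (-1:ℚ)^m * ((n+2).choose (m+1)) * ((n+1+m+1).choose (m+1))
          = (-1:ℚ)^m * ((n+1).choose (m+1)) * ((n+m+1).choose (m+1))
            + ((m:ℚ)+1) * (((-1:ℚ)^m * ((n+2).choose (m+1)) * ((n+m+1).choose (m+1)))
              * ((2*(n:ℚ)+3)/(((n:ℚ)+1)*((n:ℚ)+2)))) := by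
        linear_combination ((-1:ℚ)^m) * h4
      rw [key', add_div, mul_div_cancel_left₀ _ hm0]
    have ext : ∑ m ∈ Finset.range (n+2),
        (-1:ℚ)^m * ((n+1).choose (m+1)) * ((n+m+1).choose (m+1)) / ((m:ℚ)+1)
        = ∑ m ∈ Finset.range (n+1),
        (-1:ℚ)^m * ((n+1).choose (m+1)) * ((n+m+1).choose (m+1)) / ((m:ℚ)+1) := by
      rw [Finset.sum_range_succ, Nat.choose_succ_self]
      simp
    rw [Finset.sum_congr rfl (fun m hm => key m (by simp at hm; omega)), Finset.sum_add_distrib,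
      ext, ih, ← Finset.sum_mul, W n]
    rw [H_succ (n+1), H_succ n]
    have h1 : ((n:ℚ)+1) ≠ 0 := by positivity
    have h2 : ((n:ℚ)+2) ≠ 0 := by positivity
    field_simp
    push_cast
    ring

lemma E3p (n : ℕ) : ∑ m ∈ Finset.range (n+1),
    (-1:ℚ)^m * ((n+1).choose (m+1)) * ((n+m+1).choose (m+1)) * H (m+1)
    = (-1:ℚ)^n/((n:ℚ)+1) := by
  have hexp : ∀ m, m ≤ n → H (m+1) = ∑ t ∈ Finset.range (n+1), (-1:ℚ)^t * ((m+1).choose (t+1)) / ((t:ℚ)+1) := by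
    intro m hm
    rw [← c0 (m+1)]
    apply Finset.sum_subset (Finset.range_subset_range.2 (by omega))
    intro t _ ht
    simp only [Finset.mem_range, not_lt] at ht
    rw [Nat.choose_eq_zero_of_lt (by omega)]
    simp
  calc ∑ m ∈ Finset.range (n+1), (-1:ℚ)^m * ((n+1).choose (m+1)) * ((n+m+1).choose (m+1)) * H (m+1)
      = ∑ m ∈ Finset.range (n+1), ∑ t ∈ Finset.range (n+1),
          ((-1:ℚ)^m * ((n+1).choose (m+1)) * ((n+m+1).choose (m+1)))
            * ((-1:ℚ)^t * ((m+1).choose (t+1)) / ((t:ℚ)+1)) := by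
        refine Finset.sum_congr rfl (fun m hm => ?_)
        rw [hexp m (by simp at hm; omega), Finset.mul_sum]
    _ = ∑ t ∈ Finset.range (n+1), ∑ m ∈ Finset.range (n+1),
          ((-1:ℚ)^m * ((n+1).choose (m+1)) * ((n+m+1).choose (m+1)))
            * ((-1:ℚ)^t * ((m+1).choose (t+1)) / ((t:ℚ)+1)) := Finset.sum_comm
    _ = ∑ j ∈ Finset.range (n+1), ((-1:ℚ)^j / ((j:ℚ)+1))
          * ((-1:ℚ)^n * ((n+1).choose (j+1)) * ((n+j+1).choose j)) := by
        refine Finset.sum_congr rfl (fun j hj => ?_)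
        have hjn : j ≤ n := by simp at hj; omega
        have inner : ∑ m ∈ Finset.range (n+1),
            (-1:ℚ)^m * ((n+1).choose (m+1)) * ((n+m+1).choose (m+1)) * ((m+1).choose (j+1))
            = (-1:ℚ)^n * ((n+1).choose (j+1)) * ((n+j+1).choose j) := by
          rw [Finset.range_eq_Ico, ← Finset.sum_Ico_consecutive _ (Nat.zero_le j) (by omega : j ≤ n+1)]
          have hz : ∑ m ∈ Finset.Ico 0 j,
              (-1:ℚ)^m * ((n+1).choose (m+1)) * ((n+m+1).choose (m+1)) * ((m+1).choose (j+1)) = 0 := by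
            apply Finset.sum_eq_zero
            intro m hm
            have hlt : m < j := (Finset.mem_Ico.mp hm).2
            rw [Nat.choose_eq_zero_of_lt (show m+1 < j+1 by omega)]
            simp
          rw [hz, zero_add, Finset.sum_Ico_eq_sum_range]
          rw [show n+1-j = (n-j)+1 from by omega]
          have e : ∀ i, i ≤ n-j →
              (-1:ℚ)^(j+i) * ((n+1).choose (j+i+1)) * ((n+(j+i)+1).choose (j+i+1)) * ((j+i+1).choose (j+1))
              = ((-1:ℚ)^j * ((n+1).choose (j+1)))
                * ((-1:ℚ)^i * ((n-j).choose i) * (((n+j+1)+i).choose n)) := by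
            intro i hi
            have hmul := Nat.choose_mul (n := n+1) (show j+1 ≤ j+i+1 by omega)
            have hs1 : n+1-(j+1) = n-j := by omega
            have hs2 : j+i+1-(j+1) = i := by omega
            rw [hs1, hs2] at hmul
            have hsymm : (n+(j+i)+1).choose (j+i+1) = ((n+j+1)+i).choose n := by
              have e1 : n+(j+i)+1 = n+(j+i+1) := by omega
              have e2 : (n+(j+i+1)).choose n = (n+(j+i+1)).choose (j+i+1) := Nat.choose_symm_add
              have e3 : n+(j+i+1) = (n+j+1)+i := by omega
              rw [e1, ← e2, e3]
            have hc := congrArg (fun z : ℕ => (z:ℚ)) hmul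
            push_cast at hc
            rw [hsymm, pow_add]
            linear_combination ((-1:ℚ)^j * (-1:ℚ)^i * ((((n+j+1)+i).choose n : ℕ) : ℚ)) * hc
          rw [Finset.sum_congr rfl (fun i hi => e i (by simp at hi; omega)), ← Finset.mul_sum,
            LD n (n-j) (n+j+1), if_pos (by omega : n-j ≤ n), show n-(n-j) = j from by omega]
          have hpow : (-1:ℚ)^j * (-1:ℚ)^(n-j) = (-1:ℚ)^n := by
            rw [← pow_add]; congr 1; omega
          linear_combination (((n+1).choose (j+1) : ℚ) * (((n+j+1).choose j : ℕ) : ℚ)) * hpow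
        have hstep : ∑ m ∈ Finset.range (n+1),
            ((-1:ℚ)^m * ((n+1).choose (m+1)) * ((n+m+1).choose (m+1)))
              * ((-1:ℚ)^j * ((m+1).choose (j+1)) / ((j:ℚ)+1))
            = ((-1:ℚ)^j / ((j:ℚ)+1)) * ∑ m ∈ Finset.range (n+1),
              (-1:ℚ)^m * ((n+1).choose (m+1)) * ((n+m+1).choose (m+1)) * ((m+1).choose (j+1)) := by
          rw [Finset.mul_sum]
          exact Finset.sum_congr rfl (fun m _ => by ring)
        rw [hstep, inner]
    _ = ((-1:ℚ)^n/((n:ℚ)+1)) * ∑ j ∈ Finset.range (n+1),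
          (-1:ℚ)^j * ((n+1).choose (j+1)) * ((n+j+1).choose (j+1)) := by
        rw [Finset.mul_sum]
        refine Finset.sum_congr rfl (fun j hj => ?_)
        have h2 := helper2 n j
        calc ((-1:ℚ)^j / ((j:ℚ)+1)) * ((-1:ℚ)^n * ((n+1).choose (j+1)) * ((n+j+1).choose j))
            = ((-1:ℚ)^j * (-1:ℚ)^n * ((n+1).choose (j+1))) * (((n+j+1).choose j : ℚ)/((j:ℚ)+1)) := by ring
          _ = ((-1:ℚ)^j * (-1:ℚ)^n * ((n+1).choose (j+1))) * (((n+j+1).choose (j+1) : ℚ)/((n:ℚ)+1)) := by rw [h2]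
          _ = ((-1:ℚ)^n/((n:ℚ)+1)) * ((-1:ℚ)^j * ((n+1).choose (j+1)) * ((n+j+1).choose (j+1))) := by ring
    _ = (-1:ℚ)^n/((n:ℚ)+1) := by rw [Wp n, mul_one]

lemma E2 (n : ℕ) : ∑ m ∈ Finset.range n,
    (-1:ℚ)^m * (n.choose (m+1)) * ((n+m+1).choose (m+1)) / ((m:ℚ)+1)^2 = 2*(H n)^2 := by
  induction n with
  | zero => simp [H]
  | succ n ih =>
    have key : ∀ m, m ≤ n →
        (-1:ℚ)^m * ((n+1).choose (m+1)) * ((n+1+m+1).choose (m+1)) / ((m:ℚ)+1)^2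
        = (-1:ℚ)^m * (n.choose (m+1)) * ((n+m+1).choose (m+1)) / ((m:ℚ)+1)^2
          + ((-1:ℚ)^m * ((n+1).choose (m+1)) * ((n+m+1).choose (m+1)) / ((m:ℚ)+1))
            * (2/((n:ℚ)+1)) := by
      intro m hm
      have h3 := helper3 n (m+1) (by omega)
      push_cast at h3
      have e : ((n+1+(m+1)).choose (m+1) : ℚ) = ((n+1+m+1).choose (m+1) : ℚ) := rfl
      have e2 : ((n+(m+1)).choose (m+1) : ℚ) = ((n+m+1).choose (m+1) : ℚ) := rfl
      rw [e, e2] at h3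
      have hm0 : ((m:ℚ)+1) ≠ 0 := by positivity
      have key' : (-1:ℚ)^m * ((n+1).choose (m+1)) * ((n+1+m+1).choose (m+1))
          = (-1:ℚ)^m * (n.choose (m+1)) * ((n+m+1).choose (m+1))
            + ((m:ℚ)+1) * (((-1:ℚ)^m * ((n+1).choose (m+1)) * ((n+m+1).choose (m+1)))
              * (2/((n:ℚ)+1))) := by
        linear_combination ((-1:ℚ)^m) * h3
      rw [key', add_div]
      congr 1
      rw [pow_two, ← div_div, mul_div_cancel_left₀ _ hm0]
      ring
    have ext : ∑ m ∈ Finset.range (n+1),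
        (-1:ℚ)^m * (n.choose (m+1)) * ((n+m+1).choose (m+1)) / ((m:ℚ)+1)^2
        = ∑ m ∈ Finset.range n,
        (-1:ℚ)^m * (n.choose (m+1)) * ((n+m+1).choose (m+1)) / ((m:ℚ)+1)^2 := by
      rw [Finset.sum_range_succ, Nat.choose_succ_self]
      simp
    rw [Finset.sum_congr rfl (fun m hm => key m (by simp at hm; omega)), Finset.sum_add_distrib,
      ext, ih, ← Finset.sum_mul, G n]
    rw [H_succ n]
    have h1 : ((n:ℚ)+1) ≠ 0 := by positivity
    field_simp
    ring

lemma E3 (n : ℕ) : ∑ m ∈ Finset.range n,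
    (-1:ℚ)^m * (n.choose (m+1)) * ((n+m+1).choose (m+1)) * H (m+1) / ((m:ℚ)+1)
    = 2 * ∑ k ∈ Finset.range n, (-1:ℚ)^k/((k:ℚ)+1)^2 := by
  induction n with
  | zero => simp
  | succ n ih =>
    have key : ∀ m, m ≤ n →
        (-1:ℚ)^m * ((n+1).choose (m+1)) * ((n+1+m+1).choose (m+1)) * H (m+1) / ((m:ℚ)+1)
        = (-1:ℚ)^m * (n.choose (m+1)) * ((n+m+1).choose (m+1)) * H (m+1) / ((m:ℚ)+1)
          + ((-1:ℚ)^m * ((n+1).choose (m+1)) * ((n+m+1).choose (m+1)) * H (m+1))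
            * (2/((n:ℚ)+1)) := by
      intro m hm
      have h3 := helper3 n (m+1) (by omega)
      push_cast at h3
      have e : ((n+1+(m+1)).choose (m+1) : ℚ) = ((n+1+m+1).choose (m+1) : ℚ) := rfl
      have e2 : ((n+(m+1)).choose (m+1) : ℚ) = ((n+m+1).choose (m+1) : ℚ) := rfl
      rw [e, e2] at h3
      have hm0 : ((m:ℚ)+1) ≠ 0 := by positivity
      have key' : (-1:ℚ)^m * ((n+1).choose (m+1)) * ((n+1+m+1).choose (m+1)) * H (m+1)
          = (-1:ℚ)^m * (n.choose (m+1)) * ((n+m+1).choose (m+1)) * H (m+1)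
            + ((m:ℚ)+1) * (((-1:ℚ)^m * ((n+1).choose (m+1)) * ((n+m+1).choose (m+1)) * H (m+1))
              * (2/((n:ℚ)+1))) := by
        linear_combination ((-1:ℚ)^m * H (m+1)) * h3
      rw [key', add_div, mul_div_cancel_left₀ _ hm0]
    have ext : ∑ m ∈ Finset.range (n+1),
        (-1:ℚ)^m * (n.choose (m+1)) * ((n+m+1).choose (m+1)) * H (m+1) / ((m:ℚ)+1)
        = ∑ m ∈ Finset.range n,
        (-1:ℚ)^m * (n.choose (m+1)) * ((n+m+1).choose (m+1)) * H (m+1) / ((m:ℚ)+1) := by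
      rw [Finset.sum_range_succ, Nat.choose_succ_self]
      simp
    rw [Finset.sum_congr rfl (fun m hm => key m (by simp at hm; omega)), Finset.sum_add_distrib,
      ext, ih, ← Finset.sum_mul, E3p n, Finset.sum_range_succ,
      show ((-1:ℚ)^n/((n:ℚ)+1)^2) = (-1:ℚ)^n/((n:ℚ)+1)/((n:ℚ)+1) from by rw [pow_two, ← div_div]]
    ring

theorem stmt0 (n : ℕ) :
    ∑ k ∈ Finset.range (n + 1),
      (-1 : ℚ) ^ k * (n.choose k) * ((n + k).choose k) * (H k) ^ 2 =
    2 * (-1 : ℚ) ^ n *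
      (2 * (H n) ^ 2 + ∑ k ∈ Finset.range n, (-1 : ℚ) ^ (k + 1) / (k + 1 : ℚ) ^ 2) := by
  have ecast : ∀ m : ℕ, ((n+(m+1)).choose (m+1) : ℚ) = ((n+m+1).choose (m+1) : ℚ) := fun m => rfl
  have hneg : ∑ k ∈ Finset.range n, (-1:ℚ)^(k+1)/((k:ℚ)+1)^2
      = - ∑ k ∈ Finset.range n, (-1:ℚ)^k/((k:ℚ)+1)^2 := by
    rw [← Finset.sum_neg_distrib]
    exact Finset.sum_congr rfl (fun k _ => by ring)
  calc ∑ k ∈ Finset.range (n + 1),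
      (-1 : ℚ) ^ k * (n.choose k) * ((n + k).choose k) * (H k) ^ 2
      = ∑ k ∈ Finset.range (n+1), ∑ m ∈ Finset.range n,
          ((-1:ℚ)^k * (n.choose k) * ((n+k).choose k))
            * ((-1:ℚ)^m * (k.choose (m+1)) * (2/((m+1 : ℚ))^2 - H (m+1)/(m+1 : ℚ))) := by
        refine Finset.sum_congr rfl (fun k hk => ?_)
        rw [Hsq_expand k n (by simp at hk; omega), Finset.mul_sum]
    _ = ∑ m ∈ Finset.range n, ∑ k ∈ Finset.range (n+1),
          ((-1:ℚ)^k * (n.choose k) * ((n+k).choose k))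
            * ((-1:ℚ)^m * (k.choose (m+1)) * (2/((m+1 : ℚ))^2 - H (m+1)/(m+1 : ℚ))) :=
        Finset.sum_comm
    _ = ∑ m ∈ Finset.range n,
          ((-1:ℚ)^m * (2/((m+1 : ℚ))^2 - H (m+1)/(m+1 : ℚ)))
            * ((-1:ℚ)^n * (n.choose (m+1)) * ((n+(m+1)).choose (m+1))) := by
        refine Finset.sum_congr rfl (fun m hm => ?_)
        have hmn : m < n := by simpa using hm
        have hstep : ∑ k ∈ Finset.range (n+1),
            ((-1:ℚ)^k * (n.choose k) * ((n+k).choose k))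
              * ((-1:ℚ)^m * (k.choose (m+1)) * (2/((m+1 : ℚ))^2 - H (m+1)/(m+1 : ℚ)))
            = ((-1:ℚ)^m * (2/((m+1 : ℚ))^2 - H (m+1)/(m+1 : ℚ)))
              * ∑ k ∈ Finset.range (n+1),
                (-1:ℚ)^k * (n.choose k) * ((n+k).choose k) * (k.choose (m+1)) := by
          rw [Finset.mul_sum]
          exact Finset.sum_congr rfl (fun k _ => by ring)
        rw [hstep, diamond n (m+1) (by omega) (by omega)]
    _ = ∑ m ∈ Finset.range n, ((-1:ℚ)^n)
          * (2 * ((-1:ℚ)^m * (n.choose (m+1)) * ((n+m+1).choose (m+1)) / ((m:ℚ)+1)^2)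
            - ((-1:ℚ)^m * (n.choose (m+1)) * ((n+m+1).choose (m+1)) * H (m+1) / ((m:ℚ)+1))) := by
        refine Finset.sum_congr rfl (fun m _ => ?_)
        rw [ecast m]
        ring
    _ = ((-1:ℚ)^n) * ((2 : ℚ)
          * (∑ m ∈ Finset.range n, (-1:ℚ)^m * (n.choose (m+1)) * ((n+m+1).choose (m+1)) / ((m:ℚ)+1)^2)
          - ∑ m ∈ Finset.range n, (-1:ℚ)^m * (n.choose (m+1)) * ((n+m+1).choose (m+1)) * H (m+1) / ((m:ℚ)+1)) := by
        rw [← Finset.mul_sum, Finset.sum_sub_distrib, ← Finset.mul_sum]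
    _ = 2 * (-1 : ℚ) ^ n *
      (2 * (H n) ^ 2 + ∑ k ∈ Finset.range n, (-1 : ℚ) ^ (k + 1) / (k + 1 : ℚ) ^ 2) := by
        rw [E2 n, E3 n, hneg]
        ring
end

section
/- For any positive integer n, the sum over k from 0 to n of (-1)^k/(k+1) * C(n,k) * C(n+k,k) * H_k equals ((-1)^n - 1)/(n*(n+1)), where H_k denotes the k-th harmonic number. -/
open Finset Polynomial in
private lemma lemB' (n m : ℕ) :
    ∑ j ∈ range (n+1), (-1:ℚ)^j * (n.choose j) * ((m+j).choose m) = (-1)^n * (m.choose n) := by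
  have key : ((1 + X : ℚ[X])^m * (-X)^n) =
      ∑ j ∈ range (n+1), Polynomial.C ((-1:ℚ)^j * (n.choose j)) * (1+X)^(m+j) := by
    have h : ((-(1+X) : ℚ[X]) + 1)^n = ∑ j ∈ range (n+1),
        (-(1+X))^j * 1^(n-j) * (n.choose j) := add_pow _ _ _
    have h2 : ((-(1+X) : ℚ[X]) + 1) = -X := by ring
    rw [h2] at h
    rw [h, Finset.mul_sum]
    apply Finset.sum_congr rfl
    intro j _
    rw [neg_pow (1+X : ℚ[X])]
    rw [Polynomial.C_mul, Polynomial.C_pow, pow_add]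
    simp [Polynomial.C_neg]
    ring
  have hc := congrArg (fun p => Polynomial.coeff p m) key
  rw [Polynomial.finset_sum_coeff] at hc
  have hR : ∀ j ∈ range (n+1), (Polynomial.C ((-1:ℚ)^j * (n.choose j)) * (1+X)^(m+j)).coeff m
      = (-1:ℚ)^j * (n.choose j) * ((m+j).choose m) := by
    intro j _
    rw [Polynomial.coeff_C_mul, Polynomial.coeff_one_add_X_pow]
  rw [Finset.sum_congr rfl hR] at hc
  rw [← hc]
  have hneg : ((-X : ℚ[X]))^n = Polynomial.C ((-1:ℚ)^n) * X^n := by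
    rw [neg_pow]; simp [Polynomial.C_pow]
  rw [hneg]
  rw [show (1 + X : ℚ[X])^m * (Polynomial.C ((-1:ℚ)^n) * X^n)
      = Polynomial.C ((-1:ℚ)^n) * ((1+X)^m * X^n) by ring]
  rw [Polynomial.coeff_C_mul, Polynomial.coeff_mul_X_pow']
  by_cases hnm : n ≤ m
  · rw [if_pos hnm, Polynomial.coeff_one_add_X_pow, Nat.choose_symm hnm]
  · rw [if_neg hnm]
    rw [Nat.choose_eq_zero_of_lt (by omega)]
    simp

private lemma castA' (n m : ℕ) :
    ((n.choose (m+1)):ℚ) * (m+1) = (n.choose m) * ((n:ℚ) - m) := by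
  by_cases h : m ≤ n
  · have h2 := congrArg (fun x : ℕ => (x : ℚ)) (Nat.choose_succ_right_eq n m)
    push_cast [Nat.cast_sub h] at h2
    exact_mod_cast h2
  · rw [Nat.choose_eq_zero_of_lt (by omega), Nat.choose_eq_zero_of_lt (by omega)]
    simp

private lemma castB' (n m : ℕ) :
    (((n+m+1).choose (m+1)):ℚ) * (m+1) = ((n+m).choose m) * ((n:ℚ) + m + 1) := by
  have h2 := congrArg (fun x : ℕ => (x : ℚ)) (Nat.add_one_mul_choose_eq (n+m) m)
  push_cast [Nat.succ_eq_add_one] at h2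
  linarith

open Finset in
private lemma lemA' (n : ℕ) (hn : 0 < n) (m : ℕ) :
    ∑ k ∈ range (m+1), (-1:ℚ)^k / (k+1) * (n.choose k) * ((n+k).choose k)
      = (-1)^m * (((n:ℚ)-m)*((n:ℚ)+m+1)) / (((n:ℚ)*(n+1))*(m+1)) * (n.choose m) * ((n+m).choose m) := by
  have hn' : (n:ℚ) ≠ 0 := Nat.cast_ne_zero.mpr hn.ne'
  have hn1 : (n:ℚ) + 1 ≠ 0 := by positivity
  induction m with
  | zero => simp; field_simp
  | succ m ih =>
    rw [Finset.sum_range_succ, ih]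
    have ha := castA' n m
    have hb := castB' n m
    have hm1 : (m:ℚ) + 1 ≠ 0 := by positivity
    have hm2 : (m:ℚ) + 2 ≠ 0 := by positivity
    have hab : ((n.choose m):ℚ) * ((n:ℚ) - m) * (((n+m).choose m) * ((n:ℚ) + m + 1))
        = ((n.choose (m+1)):ℚ) * (m+1) * ((((n+m+1).choose (m+1)):ℚ) * (m+1)) := by
      rw [ha, hb]
    rw [show n + (m+1) = n + m + 1 from rfl]
    push_cast
    set a : ℚ := (n.choose m : ℚ)
    set b : ℚ := ((n+m).choose m : ℚ)
    set c : ℚ := (n.choose (m+1) : ℚ)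
    set d : ℚ := ((n+m+1).choose (m+1) : ℚ)
    have key : (((n:ℚ)-m)*((n:ℚ)+m+1)) / (((n:ℚ)*(n+1))*(m+1)) * (a * b)
        = ((m:ℚ)+1)/((n:ℚ)*(n+1)) * (c * d) := by
      field_simp
      linear_combination hab
    rw [mul_div_assoc, mul_assoc, mul_assoc, key, pow_succ]
    field_simp
    ring

open Finset in
private lemma abel' (a : ℕ → ℚ) (m : ℕ) :
    ∑ k ∈ range (m+1), a k * H k
      = (∑ k ∈ range (m+1), a k) * H (m+1)
        - ∑ j ∈ range (m+1), (∑ k ∈ range (j+1), a k) / (j+1) := by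
  induction m with
  | zero => simp [H]
  | succ m ih =>
    rw [Finset.sum_range_succ, ih, show H (m+1+1) = H (m+1) + 1/((m:ℚ)+1+1) by
        simp [H, Finset.sum_range_succ],
      Finset.sum_range_succ (fun j => (∑ k ∈ range (j+1), a k) / (j+1)) (m+1),
      Finset.sum_range_succ a (m+1)]
    push_cast
    field_simp
    ring

open Finset in
theorem stmt1 (n : ℕ) (hn : 0 < n) :
    ∑ k ∈ Finset.range (n + 1),
      (-1 : ℚ) ^ k / (k + 1 : ℚ) * (n.choose k) * ((n + k).choose k) * H k =
    ((-1 : ℚ) ^ n - 1) / (n * (n + 1) : ℚ) := by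
  have hn' : (n:ℚ) ≠ 0 := Nat.cast_ne_zero.mpr hn.ne'
  have hn1 : (n:ℚ) + 1 ≠ 0 := by positivity
  set a : ℕ → ℚ := fun k => (-1 : ℚ) ^ k / (k + 1 : ℚ) * (n.choose k) * ((n + k).choose k) with ha
  have h0 : ∑ k ∈ Finset.range (n + 1),
      (-1 : ℚ) ^ k / (k + 1 : ℚ) * (n.choose k) * ((n + k).choose k) * H k
      = ∑ k ∈ range (n+1), a k * H k := rfl
  rw [h0, abel' a n]
  -- total sum is 0
  have hSn : (∑ k ∈ range (n+1), a k) = 0 := by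
    rw [ha, lemA' n hn n]
    simp
  rw [hSn, zero_mul, zero_sub]
  -- rewrite each partial sum term
  have hterm : ∀ j ∈ range (n+1), (∑ k ∈ range (j+1), a k) / ((j:ℚ)+1)
      = (-1:ℚ)^j * ((n.choose (j+1)) * (((n+j+1).choose (j+1)):ℚ)) / ((n:ℚ)*((n:ℚ)+1)) := by
    intro j _
    rw [ha, lemA' n hn j]
    have hj1 : (j:ℚ) + 1 ≠ 0 := by positivity
    have hca := castA' n j
    have hcb := castB' n j
    set p : ℚ := (n.choose j : ℚ)
    set q : ℚ := ((n+j).choose j : ℚ)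
    set r : ℚ := (n.choose (j+1) : ℚ)
    set s : ℚ := ((n+j+1).choose (j+1) : ℚ)
    have hpq : p * ((n:ℚ) - j) * (q * ((n:ℚ) + j + 1)) = r * ((j:ℚ)+1) * (s * ((j:ℚ)+1)) := by
      rw [hca, hcb]
    field_simp
    linear_combination hpq
  rw [Finset.sum_congr rfl hterm]
  -- factor out 1/(n(n+1))
  have hfac : ∑ j ∈ range (n+1), (-1:ℚ)^j * ((n.choose (j+1)) * (((n+j+1).choose (j+1)):ℚ)) / ((n:ℚ)*((n:ℚ)+1))
      = (∑ j ∈ range (n+1), (-1:ℚ)^j * ((n.choose (j+1)) * (((n+j+1).choose (j+1)):ℚ))) / ((n:ℚ)*((n:ℚ)+1)) := by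
    rw [Finset.sum_div]
  rw [hfac]
  -- evaluate the alternating sum via lemB'
  set g : ℕ → ℚ := fun i => (-1:ℚ)^i * (n.choose i) * ((n+i).choose n) with hg
  have hB : ∑ i ∈ range (n+1), g i = (-1:ℚ)^n := by
    rw [hg]
    simpa using lemB' n n
  have hg0 : g 0 = 1 := by simp [hg]
  have hgn1 : g (n+1) = 0 := by simp [hg, Nat.choose_eq_zero_of_lt (Nat.lt_succ_self n)]
  have hsplit : ∑ i ∈ range (n+2), g i = ∑ j ∈ range (n+1), g (j+1) + g 0 :=
    Finset.sum_range_succ' g (n+1)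
  have hfull : ∑ i ∈ range (n+2), g i = (-1:ℚ)^n := by
    rw [Finset.sum_range_succ, hB, hgn1, add_zero]
  have hsh : ∑ j ∈ range (n+1), g (j+1) = (-1:ℚ)^n - 1 := by
    have := hsplit
    rw [hfull, hg0] at this
    linarith
  have hT : ∑ j ∈ range (n+1), (-1:ℚ)^j * ((n.choose (j+1)) * (((n+j+1).choose (j+1)):ℚ))
      = 1 - (-1:ℚ)^n := by
    have e1 : ∀ j ∈ range (n+1), (-1:ℚ)^j * ((n.choose (j+1)) * (((n+j+1).choose (j+1)):ℚ))
        = -(g (j+1)) := by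
      intro j _
      rw [hg]
      simp only
      rw [show n+(j+1) = n+j+1 from rfl,
        show ((n+j+1).choose n) = ((n+j+1).choose (j+1)) by
          rw [show n+j+1 = n+(j+1) from rfl]; exact Nat.choose_symm_add,
        pow_succ]
      ring
    rw [Finset.sum_congr rfl e1, Finset.sum_neg_distrib, hsh]
    ring
  rw [hT]
  field_simp
  ring
end

section
/- For any prime p ≥ 5 and any integer k with 0 ≤ k ≤ (p-1)/2, the congruence (-1)^k * C((p-1)/2, k) * C((p-1)/2 + k, k) ≡ C(2k,k)^2 / 16^k (mod p) holds, i.e., 16^k * (-1)^k * C((p-1)/2, k) * C((p-1)/2+k, k) ≡ C(2k,k)^2 (mod p). -/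
lemma aux2 (p : ℕ) (hp : p.Prime) (hp5 : 5 ≤ p) :
    ∀ k, k ≤ (p - 1) / 2 →
      ((16 : ZMod p) ^ k * (-1) ^ k * (((p - 1) / 2).choose k) * (((p - 1) / 2 + k).choose k)
        = (((2 * k).choose k : ZMod p)) ^ 2) := by
  haveI : Fact p.Prime := ⟨hp⟩
  have hodd : Odd p := hp.odd_of_ne_two (by omega)
  set m := (p - 1) / 2 with hm
  have h2m : 2 * m = p - 1 := by
    obtain ⟨t, ht⟩ := hodd
    omega
  have hM : (m : ZMod p) * 2 = -1 := by
    have : ((2 * m : ℕ) : ZMod p) = ((p - 1 : ℕ) : ZMod p) := by rw [h2m]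
    have hp1 : ((p - 1 : ℕ) : ZMod p) = -1 := by
      have h1 : 1 ≤ p := by omega
      push_cast [h1]
      simp
    rw [hp1] at this
    push_cast at this
    linear_combination this
  intro k hk
  induction k with
  | zero => simp
  | succ k ih =>
    have hkm : k ≤ m := by omega
    have ih' := ih (by omega)
    have hplt : k + 1 < p := by omega
    have hk1 : ((k : ZMod p) + 1) ≠ 0 := by
      intro h
      have : (((k + 1 : ℕ)) : ZMod p) = 0 := by push_cast; exact h
      rw [ZMod.natCast_eq_zero_iff] at this
      have := Nat.le_of_dvd (by omega) this
      omega
    set M : ZMod p := (m : ZMod p) with hMdef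
    set a : ZMod p := (m.choose (k + 1) : ZMod p) with ha
    set b : ZMod p := ((m + (k + 1)).choose (k + 1) : ZMod p) with hb
    set c : ZMod p := ((2 * (k + 1)).choose (k + 1) : ZMod p) with hc
    set u : ZMod p := (m.choose k : ZMod p) with hu
    set v : ZMod p := ((m + k).choose k : ZMod p) with hv
    set w : ZMod p := ((2 * k).choose k : ZMod p) with hw
    have c1 : a * ((k : ZMod p) + 1) = u * (M - k) := by
      have := Nat.choose_succ_right_eq m k
      have h2 := congrArg (Nat.cast : ℕ → ZMod p) this
      push_cast [Nat.cast_sub hkm] at h2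
      rw [ha, hu, hMdef]
      linear_combination h2
    have c2 : b * ((k : ZMod p) + 1) = (M + k + 1) * v := by
      have := (Nat.add_one_mul_choose_eq (m + k) k).symm
      have h2 := congrArg (Nat.cast : ℕ → ZMod p) this
      have hrw : m + (k + 1) = (m + k) + 1 := by omega
      rw [hb, hv, hMdef, hrw]
      push_cast at h2 ⊢
      linear_combination h2
    have c3 : ((k : ZMod p) + 1) * c = 2 * (2 * k + 1) * w := by
      have := Nat.succ_mul_centralBinom_succ k
      simp only [Nat.centralBinom] at this
      have h2 := congrArg (Nat.cast : ℕ → ZMod p) this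
      rw [hc, hw]
      push_cast at h2 ⊢
      linear_combination h2
    have key : ((k : ZMod p) + 1) ^ 2 *
        ((16 : ZMod p) ^ (k + 1) * (-1) ^ (k + 1) * a * b)
        = ((k : ZMod p) + 1) ^ 2 * (c ^ 2) := by
      have e1 : ((k : ZMod p) + 1) ^ 2 *
          ((16 : ZMod p) ^ (k + 1) * (-1) ^ (k + 1) * a * b)
          = (-16) * (M - k) * (M + k + 1) * ((16 : ZMod p) ^ k * (-1) ^ k * u * v) := by
        have : (16 : ZMod p) ^ (k + 1) * (-1) ^ (k + 1)
            = (-16) * ((16 : ZMod p) ^ k * (-1) ^ k) := by ring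
        linear_combination ((16 : ZMod p) ^ (k + 1) * (-1) ^ (k + 1) * ((k : ZMod p) + 1) * b) * c1
          + ((16 : ZMod p) ^ (k + 1) * (-1) ^ (k + 1) * u * (M - k)) * c2
      have e2 : (-16 : ZMod p) * (M - k) * (M + k + 1) * w ^ 2
          = 4 * (2 * (k : ZMod p) + 1) ^ 2 * w ^ 2 := by
        linear_combination (-4 * (2 * M + 1) * w ^ 2) * hM
      have e3 : ((k : ZMod p) + 1) ^ 2 * c ^ 2
          = 4 * (2 * (k : ZMod p) + 1) ^ 2 * w ^ 2 := by
        linear_combination (((k : ZMod p) + 1) * c + 2 * (2 * k + 1) * w) * c3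
      rw [e1, ih', e2, ← e3]
    have hpow : ((k : ZMod p) + 1) ^ 2 ≠ 0 := pow_ne_zero 2 hk1
    exact mul_left_cancel₀ hpow key

theorem stmt2 (p : ℕ) (hp : p.Prime) (hp5 : 5 ≤ p) (k : ℕ) (hk : k ≤ (p - 1) / 2) :
    (16 ^ k * (-1) ^ k * (((p - 1) / 2).choose k) * (((p - 1) / 2 + k).choose k) : ℤ) ≡
      (((2 * k).choose k) ^ 2 : ℤ) [ZMOD p] := by
  rw [← ZMod.intCast_eq_intCast_iff]
  push_cast
  exact aux2 p hp hp5 k hk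
end

section
/- For any prime p ≥ 5, the harmonic number H_{(p-1)/2} = sum_{k=1}^{(p-1)/2} 1/k satisfies H_{(p-1)/2} ≡ -2*q_p(2) (mod p), where q_p(2) = (2^{p-1}-1)/p is the Fermat quotient. -/
open Finset

section aux

variable {p : ℕ} [hp : Fact p.Prime]

lemma aux_choose_sub_one {k : ℕ} (hk : k < p) :
    (((p - 1).choose k : ZMod p)) = (-1) ^ k := by
  induction k with
  | zero => simp
  | succ k ih =>
    have hk' : k < p := Nat.lt_of_succ_lt hk
    have hp1 : p - 1 + 1 = p := Nat.succ_pred_eq_of_pos hp.out.pos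
    have pascal : (p - 1).choose k + (p - 1).choose (k + 1) = p.choose (k + 1) := by
      conv_rhs => rw [← hp1]
      rw [Nat.choose_succ_succ]
    have hdvd : p ∣ p.choose (k + 1) :=
      hp.out.dvd_choose_self (Nat.succ_ne_zero k) hk
    have h0 : ((p.choose (k + 1) : ℕ) : ZMod p) = 0 :=
      (ZMod.natCast_eq_zero_iff _ _).mpr hdvd
    have hc := congrArg (fun n : ℕ => (n : ZMod p)) pascal
    simp only [Nat.cast_add, h0] at hc
    have h2 : ((p - 1).choose (k + 1) : ZMod p) = -((p - 1).choose k : ZMod p) := by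
      linear_combination hc
    rw [h2, ih hk', pow_succ]
    ring

lemma aux_quot {k : ℕ} (hk : k < p - 1) :
    ((p.choose (k + 1) / p : ℕ) : ZMod p) * ((k + 1 : ℕ) : ZMod p) = (-1) ^ k := by
  have hp1 : p - 1 + 1 = p := Nat.succ_pred_eq_of_pos hp.out.pos
  have key : p * (p - 1).choose k = p.choose (k + 1) * (k + 1) := by
    have h := Nat.add_one_mul_choose_eq (p - 1) k
    simp only [Nat.succ_eq_add_one, hp1] at h
    exact h
  have hdvd : p ∣ p.choose (k + 1) :=
    hp.out.dvd_choose_self (Nat.succ_ne_zero k) (by omega)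
  have hdiv : p * (p.choose (k + 1) / p) = p.choose (k + 1) :=
    Nat.mul_div_cancel' hdvd
  have key2 : (p - 1).choose k = p.choose (k + 1) / p * (k + 1) := by
    have h : p * (p - 1).choose k = p * (p.choose (k + 1) / p * (k + 1)) := by
      conv_lhs => rw [key, ← hdiv]
      ring
    exact Nat.eq_of_mul_eq_mul_left hp.out.pos h
  have hc := congrArg (fun n : ℕ => (n : ZMod p)) key2
  simp only [Nat.cast_mul] at hc
  rw [← hc, aux_choose_sub_one (by omega)]

/-- The harmonic sum `H_{p-1}` vanishes mod `p`. -/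
lemma aux_harmonic_zero (hp5 : 5 ≤ p) :
    ∑ k ∈ range (p - 1), ((k + 1 : ℕ) : ZMod p)⁻¹ = 0 := by
  have hodd : p % 2 = 1 := Nat.odd_iff.mp (hp.out.odd_of_ne_two (by omega))
  refine Finset.sum_involution (fun a _ => p - 2 - a) ?_ ?_ ?_ ?_
  · intro a ha
    have ha' : a < p - 1 := Finset.mem_range.mp ha
    have hcast : ((p - 2 - a + 1 : ℕ) : ZMod p) = -(((a + 1 : ℕ) : ZMod p)) := by
      have hsum : (p - 2 - a + 1) + (a + 1) = p := by omega
      have h := congrArg (fun m : ℕ => (m : ZMod p)) hsum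
      simp only [Nat.cast_add, Nat.cast_one, ZMod.natCast_self] at h ⊢
      linear_combination h
    rw [hcast, inv_neg]
    ring
  · intro a ha _
    have ha' : a < p - 1 := Finset.mem_range.mp ha
    show p - 2 - a ≠ a
    omega
  · intro a ha
    have ha' : a < p - 1 := Finset.mem_range.mp ha
    show p - 2 - a ∈ range (p - 1)
    exact Finset.mem_range.mpr (by omega)
  · intro a ha
    have ha' : a < p - 1 := Finset.mem_range.mp ha
    show p - 2 - (p - 2 - a) = a
    omega

end aux

/-- Alternating/harmonic identity in any field with `2 ≠ 0`. -/
lemma aux_alt {F : Type*} [Field F] (h2 : (2 : F) ≠ 0) (n : ℕ) :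
    ∑ k ∈ range (2 * n), (-1 : F) ^ k * ((k + 1 : ℕ) : F)⁻¹ =
      (∑ k ∈ range (2 * n), ((k + 1 : ℕ) : F)⁻¹) -
        ∑ k ∈ range n, ((k + 1 : ℕ) : F)⁻¹ := by
  induction n with
  | zero => simp
  | succ n ih =>
    have h2n : 2 * (n + 1) = (2 * n + 1) + 1 := by ring
    rw [h2n, Finset.sum_range_succ, Finset.sum_range_succ, Finset.sum_range_succ,
      Finset.sum_range_succ, Finset.sum_range_succ, ih]
    have e1 : ((2 * n + 1 + 1 : ℕ) : F) = 2 * ((n + 1 : ℕ) : F) := by push_cast; ring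
    have e2 : ((2 * n + 1 + 1 : ℕ) : F)⁻¹ = 2⁻¹ * ((n + 1 : ℕ) : F)⁻¹ := by
      rw [e1, mul_inv]
    have e3 : (-1 : F) ^ (2 * n) = 1 := by
      rw [pow_mul]; norm_num
    have e4 : (-1 : F) ^ (2 * n + 1) = -1 := by
      rw [pow_succ, e3]; ring
    have h22 : (2 : F) * 2⁻¹ = 1 := mul_inv_cancel₀ h2
    rw [e2, e3, e4]
    linear_combination (-(((n + 1 : ℕ) : F)⁻¹)) * h22


lemma aux_H_succ (m : ℕ) : H (m + 1) = H m + ((m + 1 : ℕ) : ℚ)⁻¹ := by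
  rw [H, Finset.sum_range_succ, ← H, one_div]
  congr 1
  push_cast
  ring

lemma aux_H_den (m : ℕ) : (H m).den ∣ m.factorial := by
  induction m with
  | zero => simp [H]
  | succ m ih =>
    have hd := Rat.add_den_dvd (H m) (((m + 1 : ℕ) : ℚ)⁻¹)
    rw [← aux_H_succ] at hd
    have hinv : ((((m + 1 : ℕ) : ℚ))⁻¹).den = m + 1 :=
      Rat.inv_natCast_den_of_pos (Nat.succ_pos m)
    rw [hinv] at hd
    calc (H (m + 1)).den ∣ (H m).den * (m + 1) := hd
      _ ∣ m.factorial * (m + 1) := mul_dvd_mul_right ih _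
      _ = (m + 1).factorial := by rw [Nat.factorial_succ]; ring

lemma aux_H_cast {p : ℕ} [hp : Fact p.Prime] (m : ℕ) (hm : m < p) :
    ((H m : ℚ) : ZMod p) = ∑ k ∈ range m, ((k + 1 : ℕ) : ZMod p)⁻¹ := by
  induction m with
  | zero => simp [H]
  | succ m ih =>
    have hm' : m < p := by omega
    have hden1 : (((H m).den : ℕ) : ZMod p) ≠ 0 := by
      intro h
      have hdvd : p ∣ (H m).den := (ZMod.natCast_eq_zero_iff _ _).mp h
      have : p ∣ m.factorial := hdvd.trans (aux_H_den m)
      have := (hp.out.dvd_factorial).mp this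
      omega
    have hmp : ¬ p ∣ (m + 1) := by
      intro h
      have := Nat.le_of_dvd (Nat.succ_pos m) h
      omega
    have hden2 : ((((((m + 1 : ℕ) : ℚ))⁻¹).den : ℕ) : ZMod p) ≠ 0 := by
      rw [Rat.inv_natCast_den_of_pos (Nat.succ_pos m)]
      intro h
      exact hmp ((ZMod.natCast_eq_zero_iff _ _).mp h)
    have hnum : (((((m + 1 : ℕ) : ℚ)).num : ℤ) : ZMod p) ≠ 0 := by
      rw [Rat.num_natCast]
      push_cast
      intro h
      exact hmp ((ZMod.natCast_eq_zero_iff _ _).mp (by exact_mod_cast h))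
    rw [aux_H_succ, Rat.cast_add_of_ne_zero hden1 hden2, ih hm', Finset.sum_range_succ]
    congr 1
    rw [Rat.cast_inv_of_ne_zero hnum, Rat.cast_natCast]

theorem stmt3 (p : ℕ) [hp : Fact p.Prime] (hp5 : 5 ≤ p) :
    ((H ((p - 1) / 2) : ℚ) : ZMod p) =
      ((-2 * ((2 ^ (p - 1) - 1) / (p : ℤ)) : ℤ) : ZMod p) := by
  have hodd : p % 2 = 1 := Nat.odd_iff.mp (hp.out.odd_of_ne_two (by omega))
  set n := (p - 1) / 2 with hn
  have h2n : p - 1 = 2 * n := by omega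
  -- 2 is invertible mod p
  have h2 : (2 : ZMod p) ≠ 0 := by
    intro h
    have h' : ((2 : ℕ) : ZMod p) = 0 := by push_cast; exact h
    have := (ZMod.natCast_eq_zero_iff 2 p).mp h'
    have := Nat.le_of_dvd (by norm_num) this
    omega
  -- p divides 2^(p-1) - 1
  have h1le : 1 ≤ 2 ^ (p - 1) := Nat.one_le_two_pow
  have hferm : ((2 ^ (p - 1) - 1 : ℕ) : ZMod p) = 0 := by
    rw [Nat.cast_sub h1le]
    push_cast
    rw [ZMod.pow_card_sub_one_eq_one h2]
    ring
  have hdvdQ : p ∣ 2 ^ (p - 1) - 1 := (ZMod.natCast_eq_zero_iff _ _).mp hferm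
  set Q : ℕ := (2 ^ (p - 1) - 1) / p with hQ
  have hQmul : p * Q = 2 ^ (p - 1) - 1 := Nat.mul_div_cancel' hdvdQ
  -- sum of binomial quotients equals 2Q (in ℕ)
  have hsum_nat : ∑ k ∈ range (p - 1), p.choose (k + 1) / p = 2 * Q := by
    have hmul : p * ∑ k ∈ range (p - 1), p.choose (k + 1) / p
        = p * (2 * Q) := by
      rw [Finset.mul_sum]
      have : ∀ k ∈ range (p - 1), p * (p.choose (k + 1) / p) = p.choose (k + 1) := by
        intro k hk
        exact Nat.mul_div_cancel'
          (hp.out.dvd_choose_self (Nat.succ_ne_zero k) (by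
            have := Finset.mem_range.mp hk; omega))
      rw [Finset.sum_congr rfl this]
      have hbin : ∑ k ∈ range (p - 1), p.choose (k + 1) = 2 ^ p - 2 := by
        have h1 : ∑ i ∈ range (p + 1), p.choose i = 2 ^ p := Nat.sum_range_choose p
        have h2' : ∑ i ∈ range (p + 1), p.choose i
            = (∑ i ∈ range p, p.choose i) + 1 := by
          rw [Finset.sum_range_succ, Nat.choose_self]
        have h3 : ∑ i ∈ range p, p.choose i
            = (∑ k ∈ range (p - 1), p.choose (k + 1)) + 1 := by
          have hp1 : p = (p - 1) + 1 := by omega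
          conv_lhs => rw [hp1]
          rw [Finset.sum_range_succ', Nat.choose_zero_right, ← hp1]
        have h2pow : 2 ≤ 2 ^ p := by
          calc 2 = 2 ^ 1 := by norm_num
          _ ≤ 2 ^ p := Nat.pow_le_pow_right (by norm_num) (by omega)
        omega
      rw [hbin]
      have hpow : 2 ^ p = 2 * 2 ^ (p - 1) := by
        conv_lhs => rw [show p = (p - 1) + 1 by omega]
        rw [pow_succ]; ring
      have h' : p * (2 * Q) = 2 * (p * Q) := by ring
      omega
    exact Nat.eq_of_mul_eq_mul_left hp.out.pos hmul
  -- cast sum to ZMod p and replace terms by (-1)^k / (k+1)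
  have hcast_sum : ∑ k ∈ range (p - 1), (-1 : ZMod p) ^ k * ((k + 1 : ℕ) : ZMod p)⁻¹
      = 2 * (Q : ZMod p) := by
    have := congrArg (fun m : ℕ => (m : ZMod p)) hsum_nat
    simp only [Nat.cast_sum, Nat.cast_mul, Nat.cast_ofNat] at this
    rw [← this]
    refine Finset.sum_congr rfl ?_
    intro k hk
    have hk' : k < p - 1 := Finset.mem_range.mp hk
    have hne : ((k + 1 : ℕ) : ZMod p) ≠ 0 := by
      intro h
      have := (ZMod.natCast_eq_zero_iff _ _).mp h
      have := Nat.le_of_dvd (by omega) this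
      omega
    have hq := aux_quot (p := p) hk'
    exact ((eq_mul_inv_iff_mul_eq₀ hne).mpr hq).symm
  -- alternating sum identity
  have halt := aux_alt h2 n
  rw [← h2n] at halt
  have hharm := aux_harmonic_zero (p := p) hp5
  rw [hharm, zero_sub] at halt
  have hSn : ∑ k ∈ range n, ((k + 1 : ℕ) : ZMod p)⁻¹ = -(2 * (Q : ZMod p)) := by
    rw [← hcast_sum, halt]
    ring
  -- left-hand side
  have hLHS : ((H n : ℚ) : ZMod p) = ∑ k ∈ range n, ((k + 1 : ℕ) : ZMod p)⁻¹ :=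
    aux_H_cast n (by omega)
  -- right-hand side
  have hq_int : ((2 : ℤ) ^ (p - 1) - 1) / (p : ℤ) = (Q : ℤ) := by
    have hcast : ((2 : ℤ) ^ (p - 1) - 1) = ((2 ^ (p - 1) - 1 : ℕ) : ℤ) := by
      push_cast [Nat.cast_sub h1le]
      ring
    rw [hcast, hQ, ← Int.natCast_div]
  rw [hLHS, hSn, hq_int]
  push_cast
  ring
end

section
/- For any prime p ≥ 5, sum_{k=1}^{(p-1)/2} (-1)^k/k^2 ≡ 2*(-1)^{(p-1)/2} * E_{p-3} (mod p), where E_n denotes the n-th Euler number. -/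
open PowerSeries Finset

/-- The `n`-th Euler number, defined by `2/(e^x + e^{-x}) = ∑ E_n x^n/n!`. -/
noncomputable def eulerSeq (n : ℕ) : ℚ :=
  (n.factorial : ℚ) * PowerSeries.coeff (R := ℚ) n
    ((2 : PowerSeries ℚ) *
      (PowerSeries.exp ℚ + PowerSeries.rescale (-1 : ℚ) (PowerSeries.exp ℚ))⁻¹)

noncomputable def eG : PowerSeries ℚ :=
  PowerSeries.exp ℚ + PowerSeries.rescale (-1 : ℚ) (PowerSeries.exp ℚ)

lemma coeff_eG (k : ℕ) : PowerSeries.coeff k eG = (1 + (-1)^k) / k.factorial := by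
  simp [eG, PowerSeries.coeff_rescale, PowerSeries.coeff_exp, ← add_div,
    mul_one_div, add_comm]
  ring

lemma constantCoeff_eG : PowerSeries.constantCoeff eG ≠ 0 := by
  have := coeff_eG 0
  rw [PowerSeries.coeff_zero_eq_constantCoeff] at this
  rw [this]; norm_num

lemma eG_mul_inv : eG * eG⁻¹ = 1 := PowerSeries.mul_inv_cancel _ constantCoeff_eG

lemma eulerSeq_def' (n : ℕ) :
    PowerSeries.coeff n ((2 : PowerSeries ℚ) * eG⁻¹) = eulerSeq n / n.factorial := by
  rw [eulerSeq, eG]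
  field_simp

lemma euler_rec (n : ℕ) :
    ∑ k ∈ range (n+1), (1 + (-1:ℚ)^k) * (n.choose k) * eulerSeq (n - k) =
      if n = 0 then 2 else 0 := by
  have h : PowerSeries.coeff n (eG * ((2 : PowerSeries ℚ) * eG⁻¹)) =
      PowerSeries.coeff n (2 : PowerSeries ℚ) := by
    rw [← mul_assoc, mul_comm eG 2, mul_assoc, eG_mul_inv, mul_one]
  rw [PowerSeries.coeff_mul, Finset.Nat.sum_antidiagonal_eq_sum_range_succ_mk] at h
  simp only [coeff_eG, eulerSeq_def'] at h
  rw [show (2 : PowerSeries ℚ) = PowerSeries.C 2 by rw [map_ofNat], PowerSeries.coeff_C] at h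
  have hn : (n.factorial : ℚ) ≠ 0 := Nat.cast_ne_zero.mpr n.factorial_ne_zero
  have h2 := congrArg (· * (n.factorial : ℚ)) h
  simp only [Finset.sum_mul] at h2
  by_cases h0 : n = 0
  · subst h0; simpa using h2
  · simp only [h0, if_false, zero_mul] at h2 ⊢
    rw [← h2]
    apply Finset.sum_congr rfl
    intro k hk
    rw [Finset.mem_range, Nat.lt_succ_iff] at hk
    have hkf : (k.factorial : ℚ) ≠ 0 := Nat.cast_ne_zero.mpr k.factorial_ne_zero
    have hnkf : ((n-k).factorial : ℚ) ≠ 0 := Nat.cast_ne_zero.mpr (n-k).factorial_ne_zero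
    rw [Nat.cast_choose ℚ hk]
    field_simp

lemma rescale_eG : PowerSeries.rescale (-1 : ℚ) eG = eG := by
  rw [eG, map_add, PowerSeries.rescale_rescale]
  norm_num [PowerSeries.rescale_one, add_comm]

lemma rescale_S : PowerSeries.rescale (-1 : ℚ) ((2 : PowerSeries ℚ) * eG⁻¹)
    = (2 : PowerSeries ℚ) * eG⁻¹ := by
  rw [map_mul, map_ofNat]
  congr 1
  rw [PowerSeries.eq_inv_iff_mul_eq_one constantCoeff_eG]
  calc PowerSeries.rescale (-1:ℚ) eG⁻¹ * eG
      = PowerSeries.rescale (-1:ℚ) eG⁻¹ * PowerSeries.rescale (-1:ℚ) eG := by rw [rescale_eG]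
    _ = PowerSeries.rescale (-1:ℚ) (eG⁻¹ * eG) := (map_mul _ _ _).symm
    _ = 1 := by rw [mul_comm eG⁻¹ eG, eG_mul_inv, map_one]

lemma eulerSeq_odd {n : ℕ} (h : Odd n) : eulerSeq n = 0 := by
  have h1 := congrArg (PowerSeries.coeff n) rescale_S
  rw [PowerSeries.coeff_rescale] at h1
  rw [eulerSeq_def', Odd.neg_one_pow h, neg_one_mul] at h1
  have h2 : eulerSeq n / n.factorial = 0 := by linarith
  have hn : (n.factorial : ℚ) ≠ 0 := Nat.cast_ne_zero.mpr n.factorial_ne_zero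
  field_simp at h2
  simpa using h2

def intE : ℕ → ℤ
  | 0 => 1
  | (n+1) => -∑ i ∈ (Finset.range (n+1)).attach,
      (if Even (i.1+1) then ((n+1).choose (i.1+1) : ℤ) * intE (n - i.1) else 0)
  decreasing_by
    omega

lemma intE_cast : ∀ n : ℕ, (intE n : ℚ) = eulerSeq n := by
  intro n
  induction n using Nat.strong_induction_on with
  | _ n ih =>
    match n with
    | 0 =>
      have h := euler_rec 0
      simp at h
      have : eulerSeq 0 = 1 := by linarith
      simp [intE, this]
    | (n+1) =>
      have h := euler_rec (n+1)
      rw [if_neg (Nat.succ_ne_zero n)] at h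
      rw [Finset.sum_range_succ'] at h
      simp only [pow_zero, Nat.choose_zero_right, Nat.cast_one, Nat.sub_zero] at h
      -- h : ∑ i ∈ range (n+1), (1 + (-1)^(i+1)) * C(n+1,i+1) * eulerSeq (n+1-(i+1)) + (1+1)*1*eulerSeq (n+1) = 0
      have key : eulerSeq (n+1)
          = -∑ i ∈ Finset.range (n+1),
              (if Even (i+1) then (((n+1).choose (i+1) : ℚ)) * eulerSeq (n - i) else 0) := by
        have e2 : ∀ i : ℕ, (1 + (-1:ℚ)^(i+1)) * ((n+1).choose (i+1)) * eulerSeq (n+1-(i+1))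
            = 2 * (if Even (i+1) then (((n+1).choose (i+1) : ℚ)) * eulerSeq (n - i) else 0) := by
          intro i
          rcases Nat.even_or_odd (i+1) with he | ho
          · rw [if_pos he, he.neg_one_pow]
            rw [Nat.succ_sub_succ]
            ring
          · rw [if_neg (Nat.not_even_iff_odd.mpr ho), ho.neg_one_pow]
            ring
        rw [Finset.sum_congr rfl (fun i _ => e2 i), ← Finset.mul_sum] at h
        linarith
      rw [key, intE]
      rw [Int.cast_neg, neg_inj, Int.cast_sum]
      rw [Finset.sum_attach _
        (fun j => ((if Even (j+1) then ((n+1).choose (j+1) : ℤ) * intE (n - j) else 0 : ℤ) : ℚ))]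
      apply Finset.sum_congr rfl
      intro i hi
      split_ifs with hev
      · push_cast
        rw [ih (n - i) (by omega)]
      · simp

lemma intE_rec (n : ℕ) :
    ∑ k ∈ Finset.range (n+1), (1 + (-1:ℤ)^k) * (n.choose k) * intE (n - k) =
      if n = 0 then 2 else 0 := by
  have h : ((∑ k ∈ Finset.range (n+1), (1 + (-1:ℤ)^k) * (n.choose k) * intE (n - k) : ℤ) : ℚ)
      = ((if n = 0 then (2:ℤ) else 0 : ℤ) : ℚ) := by
    push_cast [intE_cast]
    rw [euler_rec n]
  exact_mod_cast h

lemma choose3 (n k j : ℕ) : n.choose k * (n-k).choose j = n.choose j * (n-j).choose k := by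
  rcases le_or_gt (k + j) n with h | h
  · have h1 := Nat.choose_mul (n := n) (show k ≤ k + j from Nat.le_add_right _ _)
    have h2 := Nat.choose_mul (n := n) (show j ≤ k + j from Nat.le_add_left _ _)
    rw [Nat.add_sub_cancel_left] at h1
    rw [Nat.add_sub_cancel] at h2
    have h3 : (k+j).choose k = (k+j).choose j := by
      rw [← Nat.choose_symm (Nat.le_add_right k j)]
      congr 1
      omega
    rw [← h1, ← h2, h3]
  · rcases le_or_gt k n with hk | hk
    · rcases le_or_gt j n with hj | hj
      · rw [Nat.choose_eq_zero_of_lt (show n - k < j by omega),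
          Nat.choose_eq_zero_of_lt (show n - j < k by omega)]
        simp
      · rw [Nat.choose_eq_zero_of_lt hj, Nat.choose_eq_zero_of_lt (show n - k < j by omega)]
        simp
    · rw [Nat.choose_eq_zero_of_lt hk, Nat.choose_eq_zero_of_lt (show n - j < k by omega)]
      simp


section ZModPart
variable (p : ℕ) [hp : Fact p.Prime]

noncomputable def ee (k : ℕ) : ZMod p := ((intE k : ℤ) : ZMod p)

lemma ee_rec (s : ℕ) :
    ∑ k ∈ Finset.range (s+1), (1 + (-1:ZMod p)^k) * (s.choose k) * ee p (s-k) =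
      if s = 0 then 2 else 0 := by
  have h2 : ((∑ k ∈ Finset.range (s+1), (1 + (-1:ℤ)^k) * (s.choose k) * intE (s - k) : ℤ) : ZMod p)
      = ((if s = 0 then (2:ℤ) else 0 : ℤ) : ZMod p) := by rw [intE_rec s]
  push_cast at h2
  simpa [ee] using h2

lemma ee_odd (k : ℕ) (hk : Odd k) : ee p k = 0 := by
  have h : intE k = 0 := by
    have h2 := intE_cast k
    rw [eulerSeq_odd hk] at h2
    exact_mod_cast h2
  simp [ee, h]

noncomputable def Ep (n : ℕ) (x : ZMod p) : ZMod p :=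
  ∑ k ∈ Finset.range (n+1), (n.choose k : ZMod p) * ee p k * (2*x-1)^(n-k)

lemma pm_pow (m n : ℕ) (hm : m ≤ n) (c : ZMod p) :
    (c+1)^m + (c-1)^m
      = ∑ j ∈ Finset.range (n+1), (m.choose j : ZMod p) * (1 + (-1:ZMod p)^(m-j)) * c^j := by
  calc (c+1)^m + (c-1)^m
      = ∑ j ∈ Finset.range (m+1),
          (c^j * 1^(m-j) * (m.choose j) + c^j * (-1:ZMod p)^(m-j) * (m.choose j)) := by
        rw [add_pow, sub_eq_add_neg, add_pow, Finset.sum_add_distrib]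
    _ = ∑ j ∈ Finset.range (n+1),
          (c^j * 1^(m-j) * (m.choose j) + c^j * (-1:ZMod p)^(m-j) * (m.choose j)) := by
        apply Finset.sum_subset (Finset.range_subset_range.mpr (by omega))
        intro j _ hj
        rw [Finset.mem_range, Nat.lt_succ_iff, not_le] at hj
        rw [Nat.choose_eq_zero_of_lt hj]
        push_cast
        ring
    _ = _ := by
        apply Finset.sum_congr rfl
        intro j _
        ring

lemma ee_rec' (s n : ℕ) (hs : s ≤ n) :
    ∑ k ∈ Finset.range (n+1), ((s.choose k : ZMod p)) * (1 + (-1:ZMod p)^(s-k)) * ee p k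
      = if s = 0 then 2 else 0 := by
  have hshrink : ∑ k ∈ Finset.range (s+1), ((s.choose k : ZMod p)) * (1 + (-1:ZMod p)^(s-k)) * ee p k
      = ∑ k ∈ Finset.range (n+1), ((s.choose k : ZMod p)) * (1 + (-1:ZMod p)^(s-k)) * ee p k := by
    apply Finset.sum_subset (Finset.range_subset_range.mpr (by omega))
    intro k _ hk
    rw [Finset.mem_range, Nat.lt_succ_iff, not_le] at hk
    rw [Nat.choose_eq_zero_of_lt hk]
    push_cast
    ring
  rw [← hshrink, ← ee_rec p s, ← Finset.sum_range_reflect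
    (fun k => ((s.choose k : ZMod p)) * (1 + (-1:ZMod p)^(s-k)) * ee p k) (s+1)]
  apply Finset.sum_congr rfl
  intro k hk
  rw [Finset.mem_range, Nat.lt_succ_iff] at hk
  simp only [Nat.succ_sub_one]
  rw [Nat.choose_symm hk, show s - (s - k) = k by omega]
  ring

lemma Ep_step (n : ℕ) (x : ZMod p) :
    Ep p n (x+1) + Ep p n x = 2^(n+1) * x^n := by
  have hsum : Ep p n (x+1) + Ep p n x
      = ∑ k ∈ Finset.range (n+1), ∑ j ∈ Finset.range (n+1),
          (n.choose k : ZMod p) * ee p k *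
            ((((n-k).choose j : ZMod p)) * (1 + (-1:ZMod p)^(n-k-j)) * (2*x)^j) := by
    rw [Ep, Ep, ← Finset.sum_add_distrib]
    apply Finset.sum_congr rfl
    intro k _
    have h1 : 2*(x+1) - 1 = (2*x) + 1 := by ring
    rw [h1, ← mul_add, pm_pow p (n-k) n (Nat.sub_le _ _) (2*x), Finset.mul_sum]
  rw [hsum, Finset.sum_comm]
  have inner : ∀ j ∈ Finset.range (n+1),
      (∑ k ∈ Finset.range (n+1), (n.choose k : ZMod p) * ee p k *
          ((((n-k).choose j : ZMod p)) * (1 + (-1:ZMod p)^(n-k-j)) * (2*x)^j))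
        = if j = n then 2 * (2*x)^n else 0 := by
    intro j hj
    rw [Finset.mem_range, Nat.lt_succ_iff] at hj
    have hmain : (∑ k ∈ Finset.range (n+1), (n.choose k : ZMod p) * ee p k *
          ((((n-k).choose j : ZMod p)) * (1 + (-1:ZMod p)^(n-k-j)) * (2*x)^j))
        = (n.choose j : ZMod p) * (2*x)^j *
            ∑ k ∈ Finset.range (n+1),
              (((n-j).choose k : ZMod p)) * (1 + (-1:ZMod p)^((n-j)-k)) * ee p k := by
      rw [Finset.mul_sum]
      apply Finset.sum_congr rfl
      intro k _
      have hc : (n.choose k : ZMod p) * ((n-k).choose j : ZMod p)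
          = (n.choose j : ZMod p) * ((n-j).choose k : ZMod p) := by
        rw [← Nat.cast_mul, ← Nat.cast_mul, choose3]
      have harg : n - k - j = n - j - k := by omega
      rw [harg]
      linear_combination (ee p k * (1 + (-1:ZMod p)^(n-j-k)) * (2*x)^j) * hc
    rw [hmain, ee_rec' p (n-j) n (Nat.sub_le _ _)]
    by_cases hjn : j = n
    · subst hjn
      rw [if_pos (Nat.sub_self j), if_pos rfl, Nat.choose_self, Nat.cast_one]
      ring
    · rw [if_neg (show ¬ (n - j = 0) by omega), if_neg hjn]
      ring
  rw [Finset.sum_congr rfl inner, Finset.sum_ite_eq' (Finset.range (n+1)) n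
    (fun _ => 2 * (2*x)^n)]
  rw [if_pos (Finset.self_mem_range_succ n)]
  rw [mul_pow]
  ring

end ZModPart

section ZModPart2
variable (p : ℕ) [hp : Fact p.Prime]

lemma two_ne (hp5 : 5 ≤ p) : (2 : ZMod p) ≠ 0 := by
  intro h
  rw [show (2 : ZMod p) = ((2:ℕ) : ZMod p) by norm_cast,
    ZMod.natCast_eq_zero_iff] at h
  have := Nat.le_of_dvd (by norm_num) h
  omega

lemma Ep_half (n : ℕ) (hp5 : 5 ≤ p) : Ep p n ((2 : ZMod p)⁻¹) = ee p n := by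
  rw [Ep]
  have h0 : 2 * (2 : ZMod p)⁻¹ - 1 = 0 := by
    rw [mul_inv_cancel₀ (two_ne p hp5)]
    ring
  rw [Finset.sum_eq_single n]
  · rw [h0, Nat.sub_self, pow_zero, Nat.choose_self, Nat.cast_one, one_mul, mul_one]
  · intro k hk hkn
    rw [Finset.mem_range, Nat.lt_succ_iff] at hk
    rw [h0, zero_pow (show n - k ≠ 0 by omega), mul_zero]
  · intro h
    exact absurd (Finset.self_mem_range_succ n) h

lemma Ep_zero (n : ℕ) (hn : Even n) (h1 : 1 ≤ n) (hp5 : 5 ≤ p) : Ep p n 0 = 0 := by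
  have hstep := Ep_step p n 0
  rw [zero_pow (show n ≠ 0 by omega), mul_zero, zero_add] at hstep
  have h01 : Ep p n 1 = Ep p n 0 := by
    rw [Ep, Ep]
    apply Finset.sum_congr rfl
    intro k hk
    rw [Finset.mem_range, Nat.lt_succ_iff] at hk
    rcases Nat.even_or_odd k with he | ho
    · have hnk : Even (n - k) := (Nat.even_sub hk).mpr (by tauto)
      rw [show 2 * (1:ZMod p) - 1 = 1 by ring, show 2 * (0:ZMod p) - 1 = -1 by ring,
        one_pow, hnk.neg_one_pow]
    · rw [ee_odd p k ho]
      ring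
  rw [h01] at hstep
  have h2 : (2 : ZMod p) * Ep p n 0 = 0 := by linear_combination hstep
  rcases mul_eq_zero.mp h2 with h | h
  · exact absurd h (two_ne p hp5)
  · exact h

lemma Ep_telescope (n m : ℕ) :
    (2:ZMod p)^(n+1) * ∑ j ∈ Finset.range m, (-1:ZMod p)^j * (j : ZMod p)^n
      = Ep p n 0 + (-1:ZMod p)^(m+1) * Ep p n (m : ZMod p) := by
  induction m with
  | zero => simp
  | succ m ih =>
    rw [Finset.sum_range_succ, mul_add, ih]
    have hstep := Ep_step p n (m : ZMod p)
    have hcast : ((m+1 : ℕ) : ZMod p) = (m : ZMod p) + 1 := by push_cast; ring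
    rw [hcast]
    linear_combination (-(-1:ZMod p)^m) * hstep

end ZModPart2

section CastPart
variable (p : ℕ) [hp : Fact p.Prime]

lemma ratCast_eq (q : ℚ) (a b : ℤ) (hb : ((b:ℤ) : ZMod p) ≠ 0) (h : q * (b:ℚ) = (a:ℚ)) :
    ((q : ℚ) : ZMod p) = (a : ZMod p) / (b : ZMod p) ∧ ((q.den : ℕ) : ZMod p) ≠ 0 := by
  have hbz : (b:ℚ) ≠ 0 := by
    intro h'
    apply hb
    have hb0 : b = 0 := by exact_mod_cast h'
    simp [hb0]
  have hq : q = (a:ℚ) / (b:ℚ) := (eq_div_iff hbz).mpr h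
  have hdvd : (q.den : ℤ) ∣ b := by
    rw [hq, ← Rat.divInt_eq_div]
    exact Rat.den_dvd a b
  have hden : ((q.den : ℕ) : ZMod p) ≠ 0 := by
    obtain ⟨c, hc⟩ := hdvd
    intro h0
    apply hb
    have : ((b : ℤ) : ZMod p) = ((q.den : ℕ) : ZMod p) * ((c : ℤ) : ZMod p) := by
      rw [hc]
      push_cast
      ring
    rw [this, h0, zero_mul]
  refine ⟨?_, hden⟩
  have h1 : (q.num : ℚ) = q * q.den := by
    rw [Rat.mul_den_eq_num]
  have hnum : q.num * b = a * q.den := by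
    have h2 : ((q.num * b : ℤ) : ℚ) = ((a * q.den : ℤ) : ℚ) := by
      push_cast
      rw [h1]
      linear_combination (q.den : ℚ) * h
    exact_mod_cast h2
  have hnum' : (q.num : ZMod p) * (b : ZMod p) = (a : ZMod p) * ((q.den : ℕ) : ZMod p) := by
    have h3 := congrArg (fun z : ℤ => (z : ZMod p)) hnum
    push_cast at h3
    exact h3
  rw [Rat.cast_def, div_eq_div_iff hden hb]
  linear_combination hnum'

lemma ratCast_add (a b : ℚ) (ha : ((a.den : ℕ) : ZMod p) ≠ 0) (hb : ((b.den : ℕ) : ZMod p) ≠ 0) :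
    ((a + b : ℚ) : ZMod p) = (a : ZMod p) + (b : ZMod p) ∧ (((a+b).den : ℕ) : ZMod p) ≠ 0 := by
  have hden : (((a+b).den : ℕ) : ZMod p) ≠ 0 := by
    obtain ⟨c, hc⟩ := Rat.add_den_dvd a b
    intro h0
    have : ((a.den * b.den : ℕ) : ZMod p) = 0 := by
      rw [hc, Nat.cast_mul, h0, zero_mul]
    rw [Nat.cast_mul] at this
    rcases mul_eq_zero.mp this with h | h
    · exact ha h
    · exact hb h
  refine ⟨?_, hden⟩
  have hanum : (a.num : ℚ) = a * a.den := by rw [Rat.mul_den_eq_num]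
  have hbnum : (b.num : ℚ) = b * b.den := by rw [Rat.mul_den_eq_num]
  set A : ℤ := a.num * b.den + b.num * a.den with hA
  set B : ℤ := (a.den : ℤ) * (b.den : ℤ) with hB
  have hBz : ((B:ℤ) : ZMod p) ≠ 0 := by
    rw [hB]
    push_cast
    exact mul_ne_zero ha hb
  have hmul : (a + b) * (B:ℚ) = (A:ℚ) := by
    rw [hA, hB]
    push_cast
    linear_combination (-(b.den:ℚ)) * hanum + (-(a.den:ℚ)) * hbnum
  rw [(ratCast_eq p (a+b) A B hBz hmul).1, Rat.cast_def, Rat.cast_def, hA, hB]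
  push_cast
  field_simp

end CastPart

lemma ratCast_sum (p : ℕ) [hp : Fact p.Prime] (s : Finset ℕ) (f : ℕ → ℚ)
    (h : ∀ i ∈ s, (((f i).den : ℕ) : ZMod p) ≠ 0) :
    ((∑ i ∈ s, f i : ℚ) : ZMod p) = ∑ i ∈ s, ((f i : ℚ) : ZMod p)
      ∧ (((∑ i ∈ s, f i).den : ℕ) : ZMod p) ≠ 0 := by
  induction s using Finset.cons_induction with
  | empty =>
    constructor
    · simp
    · simp
  | cons a s ha ih =>
    have ih' := ih (fun i hi => h i (Finset.mem_cons_of_mem hi))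
    rw [Finset.sum_cons, Finset.sum_cons]
    have hadd := ratCast_add p (f a) (∑ i ∈ s, f i) (h a (Finset.mem_cons_self a s)) ih'.2
    exact ⟨by rw [hadd.1, ih'.1], hadd.2⟩

theorem stmt4 (p : ℕ) [hp : Fact p.Prime] (hp5 : 5 ≤ p) :
    (((∑ k ∈ Finset.range ((p - 1) / 2), (-1 : ℚ) ^ (k + 1) / (k + 1 : ℚ) ^ 2) : ℚ) : ZMod p) =
      ((2 * (-1 : ℚ) ^ ((p - 1) / 2) * eulerSeq (p - 3) : ℚ) : ZMod p) := by
  have hodd : p % 2 = 1 := Nat.odd_iff.mp (hp.out.odd_of_ne_two (by omega))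
  set r : ℕ := (p - 1) / 2 with hr
  set n : ℕ := p - 3 with hn
  have hp2r : p = 2 * r + 1 := by omega
  have hrn : n = 2 * (r - 1) := by omega
  have hneven : Even n := ⟨r - 1, by omega⟩
  have hn1 : 1 ≤ n := by omega
  -- nonvanishing of k+1 in ZMod p for k < r
  have hxne : ∀ k, k < r → (((k+1 : ℕ)) : ZMod p) ≠ 0 := by
    intro k hk h0
    rw [ZMod.natCast_eq_zero_iff] at h0
    have := Nat.le_of_dvd (by omega) h0
    omega
  -- term-wise cast
  have hterm : ∀ k, k < r →
      (((( (-1:ℚ)^(k+1) / ((k:ℚ) + 1)^2) : ℚ) : ZMod p)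
        = (-1:ZMod p)^(k+1) * ((((k+1:ℕ) : ZMod p))^2)⁻¹
      ∧ ((((-1:ℚ)^(k+1) / ((k:ℚ) + 1)^2).den : ℕ) : ZMod p) ≠ 0) := by
    intro k hk
    have hbz : ((((k+1:ℤ))^2 : ℤ) : ZMod p) ≠ 0 := by
      push_cast
      apply pow_ne_zero
      exact_mod_cast hxne k hk
    have hmul : ((-1:ℚ)^(k+1) / ((k:ℚ) + 1)^2) * ((((k+1:ℤ))^2 : ℤ) : ℚ) = (((-1:ℤ)^(k+1) : ℤ) : ℚ) := by
      have : ((k:ℚ) + 1) ≠ 0 := by positivity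
      field_simp
      push_cast
      ring
    have h := ratCast_eq p _ ((-1:ℤ)^(k+1)) (((k+1:ℤ))^2) hbz hmul
    refine ⟨?_, h.2⟩
    rw [h.1]
    push_cast
    rw [div_eq_mul_inv]
  -- cast the sum
  have hsum := ratCast_sum p (Finset.range r) (fun k => (-1:ℚ)^(k+1) / ((k:ℚ) + 1)^2)
    (fun i hi => (hterm i (Finset.mem_range.mp hi)).2)
  rw [hsum.1]
  -- Fermat: replace inverse squares by powers
  have hfer : ∀ k, k < r → ((((k+1:ℕ) : ZMod p))^2)⁻¹ = (((k+1:ℕ) : ZMod p))^n := by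
    intro k hk
    have hx := hxne k hk
    apply inv_eq_of_mul_eq_one_right
    rw [← pow_add, show 2 + n = p - 1 by omega]
    exact ZMod.pow_card_sub_one_eq_one hx
  have hLHS : (∑ k ∈ Finset.range r, ((((-1:ℚ)^(k+1) / ((k:ℚ) + 1)^2) : ℚ) : ZMod p))
      = ∑ k ∈ Finset.range r, (-1:ZMod p)^(k+1) * (((k+1:ℕ) : ZMod p))^n := by
    apply Finset.sum_congr rfl
    intro k hk
    rw [Finset.mem_range] at hk
    rw [(hterm k hk).1, hfer k hk]
  rw [hLHS]
  -- telescoping identity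
  have htel := Ep_telescope p n (r+1)
  have hm : (((r+1:ℕ)) : ZMod p) = (2 : ZMod p)⁻¹ := by
    apply eq_inv_of_mul_eq_one_left
    have h2 : ((2 * (r+1) : ℕ) : ZMod p) = ((p + 1 : ℕ) : ZMod p) := by
      congr 1
      omega
    push_cast [ZMod.natCast_self] at h2
    push_cast
    linear_combination h2
  rw [Ep_zero p n hneven hn1 hp5, hm, Ep_half p n hp5, zero_add] at htel
  -- peel off j = 0 from telescope sum
  rw [Finset.sum_range_succ' (fun j => (-1:ZMod p)^j * ((j:ℕ) : ZMod p)^n) r] at htel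
  simp only [Nat.cast_zero, pow_zero, one_mul, zero_pow (show n ≠ 0 by omega), mul_zero, add_zero] at htel
  -- htel : 2^(n+1) * ∑ k ∈ range r, (-1)^(k+1) * ((k+1:ℕ):ZMod p)^n = (-1)^(r+2) * ee p n
  -- now RHS
  have hRHS : ((2 * (-1 : ℚ) ^ r * eulerSeq n : ℚ) : ZMod p) = 2 * (-1:ZMod p)^r * ee p n := by
    have h1 : (2 * (-1 : ℚ) ^ r * eulerSeq n : ℚ) = ((2 * (-1:ℤ)^r * intE n : ℤ) : ℚ) := by
      rw [← intE_cast n]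
      push_cast
      ring
    rw [h1, Rat.cast_intCast]
    push_cast
    rfl
  rw [hRHS]
  -- finish with Fermat for 2
  have h2fer : (2:ZMod p) * (2:ZMod p)^(n+1) = 1 := by
    rw [← pow_succ', show n + 1 + 1 = p - 1 by omega]
    exact ZMod.pow_card_sub_one_eq_one (two_ne p hp5)
  calc ∑ k ∈ Finset.range r, (-1:ZMod p)^(k+1) * (((k+1:ℕ) : ZMod p))^n
      = (2 * (2:ZMod p)^(n+1)) * (∑ k ∈ Finset.range r, (-1:ZMod p)^(k+1) * (((k+1:ℕ) : ZMod p))^n) := by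
        rw [h2fer, one_mul]
    _ = 2 * ((2:ZMod p)^(n+1) * ∑ k ∈ Finset.range r, (-1:ZMod p)^(k+1) * (((k+1:ℕ) : ZMod p))^n) := by ring
    _ = 2 * ((-1:ZMod p)^(r+1+1) * ee p n) := by rw [htel]
    _ = 2 * (-1:ZMod p)^r * ee p n := by
        rw [pow_succ, pow_succ]
        ring
end
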